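/- arXiv:1509.05857 — 13 statements merged into one kernel-verified Lean document; each statement's English description precedes it below -/
import Mathlib

section
/- If G is a C4-free graph on n vertices with minimum degree δ, then the clique number of G satisfies ω(G) ≥ δ²/(2n + δ). -/
open SimpleGraph
open scoped Classical

/-- `G` contains no induced 4-cycle. -/
def IsC4Free {V : Type*} (G : SimpleGraph V) : Prop :=
  ∀ a b c d : V, a ≠ c → b ≠ d → G.Adj a b → G.Adj b c → G.Adj c d → G.Adj d a →
    ¬G.Adj a c → ¬G.Adj b d → False

/-- A set of pairwise non-adjacent vertices. -/
def IsIndepSet {V : Type*} (G : SimpleGraph V) (s : Set V) : Prop :=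
  ∀ ⦃x⦄, x ∈ s → ∀ ⦃y⦄, y ∈ s → x ≠ y → ¬G.Adj x y

/-- The independence number: the clique number of the complement. -/
noncomputable def indepNum {V : Type*} (G : SimpleGraph V) : ℕ := Gᶜ.cliqueNum

section Aux

variable {V : Type*} [Fintype V] (G : SimpleGraph V) [DecidableRel G.Adj]

open Finset

/-- The common neighborhood of a nonadjacent pair in a C4-free graph is a clique. -/
lemma common_clique (hC4 : IsC4Free G) {x y : V} (hxy : x ≠ y) (hadj : ¬G.Adj x y) :
    (G.neighborFinset x ∩ G.neighborFinset y).card ≤ G.cliqueNum := by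
  have hclique : G.IsClique ((G.neighborFinset x ∩ G.neighborFinset y) : Finset V) := by
    intro z hz w hw hzw
    simp only [coe_inter, Set.mem_inter_iff, mem_coe, mem_neighborFinset] at hz hw
    by_contra hnadj
    exact hC4 z x w y hzw hxy (hz.1.symm) (hw.1) (hw.2.symm) (hz.2) hnadj hadj
  exact SimpleGraph.IsClique.card_le_cliqueNum (tc := hclique)

/-- closed neighborhood as a finset -/
private noncomputable def cN (x : V) : Finset V := insert x (G.neighborFinset x)

lemma cN_card (x : V) : (cN G x).card = G.degree x + 1 := by
  rw [cN, card_insert_of_notMem (by simp), card_neighborFinset_eq_degree]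

lemma cN_inter_card (hC4 : IsC4Free G) {x y : V} (hxy : x ≠ y) (hadj : ¬G.Adj x y) :
    ((cN G x) ∩ (cN G y)).card ≤ G.cliqueNum := by
  have hsub : (cN G x) ∩ (cN G y) ⊆ G.neighborFinset x ∩ G.neighborFinset y := by
    intro z hz
    simp only [cN, mem_inter, mem_insert, mem_neighborFinset] at hz ⊢
    rcases hz with ⟨h1, h2⟩
    rcases h1 with rfl | h1
    · rcases h2 with rfl | h2
      · exact absurd rfl hxy
      · exact absurd h2.symm hadj
    · rcases h2 with rfl | h2
      · exact absurd h1 hadj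
      · exact ⟨h1, h2⟩
  exact le_trans (card_le_card hsub) (common_clique G hC4 hxy hadj)

/-- Greedy independent set lemma: if every vertex of `S` has at least `d` neighbours
inside `S`, then there is an independent set `I ⊆ S` with `d ≤ ω * |I|`. -/
lemma greedy_indep (hC4 : IsC4Free G) :
    ∀ (N : ℕ) (S : Finset V) (d : ℕ), S.card ≤ N → S.Nonempty →
      (∀ x ∈ S, d ≤ (S ∩ G.neighborFinset x).card) →
      ∃ I : Finset V, I ⊆ S ∧ (∀ x ∈ I, ∀ y ∈ I, x ≠ y → ¬G.Adj x y) ∧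
        d ≤ G.cliqueNum * I.card := by
  intro N
  induction N with
  | zero => intro S d hS hne _; exact absurd (card_pos.mpr hne) (by omega)
  | succ N ih =>
    intro S d hS hne hdeg
    by_cases hdk : d ≤ G.cliqueNum
    · obtain ⟨v, hv⟩ := hne
      exact ⟨{v}, singleton_subset_iff.mpr hv,
        by intro x hx y hy hxy; simp only [mem_singleton] at hx hy; exact absurd (hx.trans hy.symm) hxy,
        by simpa using hdk⟩
    · push_neg at hdk
      -- pick v ∈ S of minimal in-S degree
      obtain ⟨v, hvS, hvmin⟩ := exists_min_image S (fun x => (S ∩ G.neighborFinset x).card) hne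
      set S' := S \ (cN G v) with hS'
      have hvcN : v ∈ cN G v := by simp [cN]
      have hS'sub : S' ⊆ S := sdiff_subset
      have hvnot : v ∉ S' := by simp [hS', hvcN]
      -- S' nonempty, else S is a clique and d ≤ cliqueNum
      have hS'ne : S'.Nonempty := by
        by_contra hemp
        rw [not_nonempty_iff_eq_empty, sdiff_eq_empty_iff_subset] at hemp
        -- then S ⊆ N[v], so S∩N(v) = S \ {v}, so everyone's in-degree is |S|-1, so S is a clique
        have hclique : G.IsClique (S : Set V) := by
          intro a ha b hb hab
          by_contra hnadj
          have hcard : (S ∩ G.neighborFinset a).card ≤ (S \ {a, b}).card := by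
            apply card_le_card
            intro z hz
            simp only [mem_inter, mem_neighborFinset] at hz
            simp only [mem_sdiff, mem_insert, mem_singleton]
            refine ⟨hz.1, ?_⟩
            rintro (rfl | rfl)
            · exact (G.loopless.irrefl _ hz.2)
            · exact hnadj hz.2
          have hab' : ({a, b} : Finset V) ⊆ S := by
            intro z hz; simp only [mem_insert, mem_singleton] at hz
            rcases hz with rfl | rfl <;> assumption
          have hcard2 : (S \ {a, b}).card = S.card - 2 := by
            rw [card_sdiff_of_subset hab', card_pair hab]
          -- v's in-S degree is |S| - 1
          have hv1 : S.card - 1 ≤ (S ∩ G.neighborFinset v).card := by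
            have : S \ {v} ⊆ S ∩ G.neighborFinset v := by
              intro z hz
              simp only [mem_sdiff, mem_singleton] at hz
              have := hemp hz.1
              simp only [cN, mem_insert, mem_neighborFinset] at this
              rcases this with rfl | h
              · exact absurd rfl hz.2
              · simp only [mem_inter, mem_neighborFinset]; exact ⟨hz.1, h⟩
            calc S.card - 1 = (S \ {v}).card := by
                  rw [card_sdiff_of_subset (singleton_subset_iff.mpr hvS), card_singleton]
              _ ≤ _ := card_le_card this
          have h2 : 2 ≤ S.card := by
            have := card_le_card hab'
            rwa [card_pair hab] at this
          have := hvmin a ha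
          omega
        have hSk : S.card ≤ G.cliqueNum :=
          SimpleGraph.IsClique.card_le_cliqueNum (tc := hclique)
        have hd : d ≤ (S ∩ G.neighborFinset v).card := hdeg v hvS
        have hSd : (S ∩ G.neighborFinset v).card ≤ S.card - 1 := by
          have : S ∩ G.neighborFinset v ⊆ S \ {v} := by
            intro z hz
            simp only [mem_inter, mem_neighborFinset] at hz
            simp only [mem_sdiff, mem_singleton]
            exact ⟨hz.1, fun h => G.loopless.irrefl v (h ▸ hz.2)⟩
          calc (S ∩ G.neighborFinset v).card ≤ (S \ {v}).card := card_le_card this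
            _ = S.card - 1 := by rw [card_sdiff_of_subset (singleton_subset_iff.mpr hvS), card_singleton]
        omega
      -- every vertex of S' has in-S' degree ≥ d - cliqueNum
      have hdeg' : ∀ x ∈ S', d - G.cliqueNum ≤ (S' ∩ G.neighborFinset x).card := by
        intro x hx
        have hxS : x ∈ S := hS'sub hx
        have hxv : x ≠ v := fun h => hvnot (h ▸ hx)
        have hxvadj : ¬G.Adj x v := by
          intro h
          have : x ∈ cN G v := by simp [cN, mem_neighborFinset, h.symm]
          exact (mem_sdiff.mp hx).2 this
        have key : (S ∩ G.neighborFinset x) ⊆ (S' ∩ G.neighborFinset x) ∪ (cN G x ∩ cN G v) := by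
          intro z hz
          simp only [mem_inter] at hz
          by_cases hzS' : z ∈ S'
          · exact mem_union_left _ (mem_inter.mpr ⟨hzS', hz.2⟩)
          · have hzcN : z ∈ cN G v := by
              have := mem_sdiff.not.mp hzS'
              push_neg at this
              exact this hz.1
            apply mem_union_right
            apply mem_inter.mpr
            refine ⟨?_, hzcN⟩
            simp only [cN, mem_insert]
            right
            rw [mem_neighborFinset] at hz ⊢
            exact hz.2
        have hcard := card_le_card key
        have hcard2 := card_union_le (S' ∩ G.neighborFinset x) (cN G x ∩ cN G v)
        have hcn := cN_inter_card G hC4 hxv hxvadj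
        have := hdeg x hxS
        omega
      have hcard' : S'.card ≤ N := by
        have : S'.card < S.card := card_lt_card (ssubset_iff_of_subset hS'sub |>.mpr ⟨v, hvS, hvnot⟩)
        omega
      obtain ⟨I', hI'sub, hI'indep, hI'card⟩ := ih S' (d - G.cliqueNum) hcard' hS'ne hdeg'
      refine ⟨insert v I', ?_, ?_, ?_⟩
      · intro z hz
        rcases mem_insert.mp hz with rfl | hz
        · exact hvS
        · exact hS'sub (hI'sub hz)
      · intro x hx y hy hxy
        have nadj : ∀ w ∈ I', ¬G.Adj v w := by
          intro w hw hadj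
          have hwS' := hI'sub hw
          have : w ∈ cN G v := by simp [cN, mem_neighborFinset, hadj]
          exact (mem_sdiff.mp hwS').2 this
        rcases mem_insert.mp hx with hx' | hx'
        · rcases mem_insert.mp hy with hy' | hy'
          · exact absurd (hx'.trans hy'.symm) hxy
          · rw [hx']; exact nadj y hy'
        · rcases mem_insert.mp hy with hy' | hy'
          · rw [hy']; exact fun h => nadj x hx' h.symm
          · exact hI'indep x hx' y hy' hxy
      · have hvnotI' : v ∉ I' := fun h => hvnot (hI'sub h)
        rw [card_insert_of_notMem hvnotI', Nat.mul_add, Nat.mul_one]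
        omega

/-- Bonferroni-type bound for independent sets. -/
lemma bonferroni (hC4 : IsC4Free G) (I : Finset V)
    (hindep : ∀ x ∈ I, ∀ y ∈ I, x ≠ y → ¬G.Adj x y) :
    2 * (I.card * (G.minDegree + 1)) ≤
      2 * (I.biUnion (cN G)).card + I.card * (I.card - 1) * G.cliqueNum := by
  classical
  induction I using Finset.induction_on with
  | empty => simp
  | @insert x I hxI ih =>
    have hindepI : ∀ a ∈ I, ∀ b ∈ I, a ≠ b → ¬G.Adj a b := fun a ha b hb =>
      hindep a (mem_insert_of_mem ha) b (mem_insert_of_mem hb)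
    have ihI := ih hindepI
    set U := I.biUnion (cN G) with hU
    set t := I.card with ht
    have hbi : (insert x I).biUnion (cN G) = cN G x ∪ U := by
      rw [biUnion_insert]
    have hcardins : (insert x I).card = t + 1 := card_insert_of_notMem hxI
    -- |cN x ∩ U| ≤ t * cliqueNum
    have hinter : (cN G x ∩ U).card ≤ t * G.cliqueNum := by
      have : cN G x ∩ U = I.biUnion (fun y => cN G x ∩ cN G y) := by
        rw [hU]
        ext z
        simp only [mem_inter, mem_biUnion]
        tauto
      rw [this]
      calc (I.biUnion (fun y => cN G x ∩ cN G y)).card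
          ≤ ∑ y ∈ I, (cN G x ∩ cN G y).card := card_biUnion_le
        _ ≤ ∑ _y ∈ I, G.cliqueNum := by
            apply Finset.sum_le_sum
            intro y hy
            have hxy : x ≠ y := fun h => hxI (h ▸ hy)
            have hnadj : ¬G.Adj x y :=
              hindep x (mem_insert_self x I) y (mem_insert_of_mem hy) hxy
            exact cN_inter_card G hC4 hxy hnadj
        _ = t * G.cliqueNum := by rw [Finset.sum_const, smul_eq_mul]
    have hunion : (cN G x ∪ U).card + (cN G x ∩ U).card = (cN G x).card + U.card :=
      card_union_add_card_inter _ _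
    have hdeg : G.minDegree + 1 ≤ (cN G x).card := by
      rw [cN_card]
      exact Nat.add_le_add_right (G.minDegree_le_degree x) 1
    rw [hbi, hcardins]
    have h1 : (t + 1) * ((t + 1) - 1) * G.cliqueNum
        = t * (t - 1) * G.cliqueNum + 2 * (t * G.cliqueNum) := by
      cases t with
      | zero => simp
      | succ m =>
        simp only [Nat.add_sub_cancel, Nat.succ_sub_one]
        ring
    have h2 : (t + 1) * (G.minDegree + 1) = t * (G.minDegree + 1) + (G.minDegree + 1) := by
      rw [add_mul, one_mul]
    omega

end Aux

theorem stmt1 {V : Type*} [Fintype V] (G : SimpleGraph V) [DecidableRel G.Adj]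
    (hC4 : IsC4Free G) :
    (G.cliqueNum : ℝ) ≥
      (G.minDegree : ℝ) ^ 2 / (2 * (Fintype.card V : ℝ) + (G.minDegree : ℝ)) := by
  classical
  set n := Fintype.card V with hn
  set δ := G.minDegree with hδ
  set k := G.cliqueNum with hk
  -- key claim in ℕ : δ * δ ≤ (2n + δ) * k
  have key : δ * δ ≤ (2 * n + δ) * k := by
    by_cases hδ0 : δ = 0
    · simp [hδ0]
    by_cases hV : IsEmpty V
    · -- no vertices: δ = 0
      exfalso; apply hδ0
      rw [hδ, SimpleGraph.minDegree]
      have : (Finset.univ : Finset V) = ∅ := Finset.univ_eq_empty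
      rw [this]
      simp
    rw [not_isEmpty_iff] at hV
    have hne : (Finset.univ : Finset V).Nonempty := Finset.univ_nonempty
    -- greedy independent set
    obtain ⟨I, _, hindep, hIcard⟩ := greedy_indep G hC4 (Finset.univ.card) Finset.univ δ
      le_rfl hne (by
        intro x _
        rw [Finset.univ_inter, SimpleGraph.card_neighborFinset_eq_degree]
        exact G.minDegree_le_degree x)
    rw [← hk] at hIcard
    -- minimal t with δ ≤ k * t
    have hPt : δ ≤ k * I.card := hIcard
    have hex : ∃ t, δ ≤ k * t := ⟨I.card, hPt⟩
    set t := Nat.find hex with htdef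
    have htspec : δ ≤ k * t := by rw [htdef]; exact Nat.find_spec hex
    have htle : t ≤ I.card := by rw [htdef]; exact Nat.find_le hPt
    have ht1 : 1 ≤ t := by
      rcases Nat.eq_zero_or_pos t with h | h
      · rw [h, Nat.mul_zero] at htspec; omega
      · exact h
    have htmin : k * (t - 1) < δ := by
      have h : ¬ δ ≤ k * (t - 1) := by
        rw [htdef]
        exact Nat.find_min hex (by rw [← htdef]; omega)
      omega
    -- take subset of I of size t
    obtain ⟨I₀, hI₀sub, hI₀card⟩ := Finset.exists_subset_card_eq htle
    have hindep₀ : ∀ x ∈ I₀, ∀ y ∈ I₀, x ≠ y → ¬G.Adj x y := fun x hx y hy =>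
      hindep x (hI₀sub hx) y (hI₀sub hy)
    have hbon := bonferroni G hC4 I₀ hindep₀
    rw [hI₀card, ← hδ, ← hk] at hbon
    have hUn : (I₀.biUnion (cN G)).card ≤ n := by
      rw [hn]
      exact Finset.card_le_univ _
    -- t*(t-1)*k ≤ t*(δ-1)
    have h2 : t * (t - 1) * k ≤ t * (δ - 1) := by
      have hsub : (t - 1) * k ≤ δ - 1 := by
        have h := htmin
        have hcomm : (t - 1) * k = k * (t - 1) := Nat.mul_comm _ _
        omega
      rw [Nat.mul_assoc]
      exact Nat.mul_le_mul_left t hsub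
    have htδ : t * δ ≤ 2 * n := by
      have h3 : t * (δ - 1) = t * δ - t := by rw [Nat.mul_sub, Nat.mul_one]
      have h4 : t * (δ + 1) = t * δ + t := by rw [Nat.mul_add, Nat.mul_one]
      omega
    calc δ * δ ≤ (k * t) * δ := Nat.mul_le_mul_right δ htspec
      _ = k * (t * δ) := by rw [Nat.mul_assoc]
      _ ≤ k * (2 * n) := Nat.mul_le_mul_left k htδ
      _ = (2 * n) * k := Nat.mul_comm _ _
      _ ≤ (2 * n + δ) * k := Nat.mul_le_mul_right k (by omega)
  -- now transfer to ℝ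
  have hVn : 0 < n ∨ (δ = 0 ∧ n = 0) := by
    by_cases h : n = 0
    · right
      constructor
      · have : IsEmpty V := Fintype.card_eq_zero_iff.mp h
        rw [hδ, SimpleGraph.minDegree]
        have : (Finset.univ : Finset V) = ∅ := Finset.univ_eq_empty
        rw [this]; simp
      · exact h
    · left; omega
  rcases hVn with hpos | ⟨h1, h2⟩
  · rw [ge_iff_le, div_le_iff₀ (by positivity)]
    have := key
    have hcast : (δ : ℝ) * δ ≤ ((2 * n + δ : ℕ) : ℝ) * k := by
      calc (δ:ℝ) * δ = ((δ * δ : ℕ) : ℝ) := by push_cast; ring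
        _ ≤ (((2*n+δ)*k : ℕ) : ℝ) := by exact_mod_cast Nat.cast_le.mpr key
        _ = ((2*n+δ : ℕ):ℝ) * k := by push_cast; ring
    calc (δ:ℝ)^2 = (δ:ℝ) * δ := by ring
      _ ≤ ((2*n+δ : ℕ):ℝ) * k := hcast
      _ = (k:ℝ) * (2 * n + δ) := by push_cast; ring
  · rw [h1, h2]
    simp
end

section
/- If G is a C4-free graph on n vertices with minimum degree δ(G) ≤ 11n/15, then ω(G) ≥ δ(G) − n/3. -/
open SimpleGraph
open scoped Classical

/-- In an induced-C4-free graph, the common neighborhood of a nonadjacent pair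
is a clique. -/
lemma common_nbrs_clique {V : Type*} [Fintype V] (G : SimpleGraph V) [DecidableRel G.Adj]
    (hC4 : IsC4Free G) {x y : V} (hxy : x ≠ y) (hnadj : ¬G.Adj x y) :
    G.IsClique ((G.neighborFinset x ∩ G.neighborFinset y : Finset V) : Set V) := by
  intro u hu w hw huw
  simp only [Finset.coe_inter, Set.mem_inter_iff, Finset.mem_coe,
    mem_neighborFinset] at hu hw
  by_contra hne
  exact hC4 x u y w hxy huw hu.1 (G.adj_symm hu.2) hw.2 (G.adj_symm hw.1) hnadj hne

lemma card_le_cliqueNum' {V : Type*} [Fintype V] (G : SimpleGraph V)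
    {s : Finset V} (hs : G.IsClique (s : Set V)) : s.card ≤ G.cliqueNum :=
  IsClique.card_le_cliqueNum (tc := hs)

theorem stmt2 {V : Type*} [Fintype V] (G : SimpleGraph V) [DecidableRel G.Adj]
    (hC4 : IsC4Free G) (hδ : (G.minDegree : ℝ) ≤ 11 * (Fintype.card V : ℝ) / 15) :
    (G.cliqueNum : ℝ) ≥ (G.minDegree : ℝ) - (Fintype.card V : ℝ) / 3 := by
  set n := Fintype.card V with hn
  rcases Nat.eq_zero_or_pos n with h0 | hpos
  · rw [h0] at hδ ⊢
    have : (0 : ℝ) ≤ (G.cliqueNum : ℝ) := by positivity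
    push_cast at hδ ⊢
    linarith
  have : Nonempty V := Fintype.card_pos_iff.mp hpos
  by_cases h3 : ∃ a b c : V, a ≠ b ∧ a ≠ c ∧ b ≠ c ∧ ¬G.Adj a b ∧ ¬G.Adj a c ∧ ¬G.Adj b c
  · -- Case 1: independent triple
    obtain ⟨a, b, c, hab, hac, hbc, nab, nac, nbc⟩ := h3
    set A := G.neighborFinset a
    set B := G.neighborFinset b
    set C := G.neighborFinset c
    have hAB : (A ∩ B).card ≤ G.cliqueNum :=
      card_le_cliqueNum' G (common_nbrs_clique G hC4 hab nab)
    have hAC : (A ∩ C).card ≤ G.cliqueNum :=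
      card_le_cliqueNum' G (common_nbrs_clique G hC4 hac nac)
    have hBC : (B ∩ C).card ≤ G.cliqueNum :=
      card_le_cliqueNum' G (common_nbrs_clique G hC4 hbc nbc)
    have hcardA : G.minDegree ≤ A.card := by
      rw [card_neighborFinset_eq_degree]; exact G.minDegree_le_degree a
    have hcardB : G.minDegree ≤ B.card := by
      rw [card_neighborFinset_eq_degree]; exact G.minDegree_le_degree b
    have hcardC : G.minDegree ≤ C.card := by
      rw [card_neighborFinset_eq_degree]; exact G.minDegree_le_degree c
    have e1 : (A ∪ B).card + (A ∩ B).card = A.card + B.card :=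
      Finset.card_union_add_card_inter A B
    have e2 : (A ∪ B ∪ C).card + ((A ∪ B) ∩ C).card = (A ∪ B).card + C.card :=
      Finset.card_union_add_card_inter (A ∪ B) C
    have e3 : ((A ∪ B) ∩ C).card ≤ (A ∩ C).card + (B ∩ C).card := by
      rw [Finset.union_inter_distrib_right]
      exact Finset.card_union_le _ _
    have e4 : (A ∪ B ∪ C).card ≤ n := by
      rw [hn]; exact Finset.card_le_univ _
    have key : 3 * G.minDegree ≤ n + 3 * G.cliqueNum := by omega
    have := hn
    push_cast [← hn]
    have key' : (3 : ℝ) * G.minDegree ≤ n + 3 * G.cliqueNum := by exact_mod_cast key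
    linarith
  · push_neg at h3
    -- every triple of distinct vertices has an edge
    by_cases hcomp : ∃ x y : V, x ≠ y ∧ ¬G.Adj x y
    · obtain ⟨x, y, hxy, nxy⟩ := hcomp
      -- clique 1 : common neighborhood of x, y
      set C := G.neighborFinset x ∩ G.neighborFinset y with hC
      have hCclique : (C.card : ℝ) ≤ G.cliqueNum := by
        exact_mod_cast card_le_cliqueNum' G (common_nbrs_clique G hC4 hxy nxy)
      have hunion : (G.neighborFinset x ∪ G.neighborFinset y).card + 2 ≤ n := by
        have hdisj : Disjoint (G.neighborFinset x ∪ G.neighborFinset y) ({x, y} : Finset V) := by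
          simp only [Finset.disjoint_insert_right, Finset.disjoint_singleton_right,
            Finset.mem_union, mem_neighborFinset]
          push_neg
          exact ⟨⟨fun h => (G.irrefl h), fun h => nxy (G.adj_symm h)⟩,
            ⟨fun h => nxy h, fun h => (G.irrefl h)⟩⟩
        have := Finset.card_le_univ ((G.neighborFinset x ∪ G.neighborFinset y) ∪ ({x, y} : Finset V))
        rw [Finset.card_union_of_disjoint hdisj, Finset.card_pair hxy] at this
        exact this
      have e1 : (G.neighborFinset x ∪ G.neighborFinset y).card + C.card
          = G.degree x + G.degree y := by
        rw [hC, Finset.card_union_add_card_inter,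
          card_neighborFinset_eq_degree, card_neighborFinset_eq_degree]
      have hdx : G.minDegree ≤ G.degree x := G.minDegree_le_degree x
      have hdy : G.minDegree ≤ G.degree y := G.minDegree_le_degree y
      -- clique 2 : non-neighborhood of a minimum degree vertex
      obtain ⟨v, hv⟩ := G.exists_minimal_degree_vertex
      set D := (Finset.univ : Finset V) \ insert v (G.neighborFinset v) with hD
      have hDclique : G.IsClique (D : Set V) := by
        intro p hp q hq hpq
        simp only [hD, Finset.coe_sdiff, Set.mem_diff, Finset.coe_insert, Finset.mem_coe,
          Finset.coe_univ, Set.mem_insert_iff, Finset.mem_coe, mem_neighborFinset] at hp hq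
        by_contra hne
        have hvp : v ≠ p := fun h => hp.2 (Or.inl h.symm)
        have hvq : v ≠ q := fun h => hq.2 (Or.inl h.symm)
        exact hne (h3 v p q hvp hvq hpq (fun h => hp.2 (Or.inr h)) (fun h => hq.2 (Or.inr h)))
      have hDcard : D.card + (1 + G.degree v) = n := by
        have h1 : (insert v (G.neighborFinset v)).card = 1 + G.degree v := by
          rw [Finset.card_insert_of_notMem (by simp), card_neighborFinset_eq_degree]; omega
        have h2 := Finset.card_sdiff_of_subset (Finset.subset_univ (insert v (G.neighborFinset v)))
        have h3' := Finset.card_le_univ (insert v (G.neighborFinset v))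
        have h4 : (Finset.univ : Finset V).card = n := by rw [hn, Finset.card_univ]
        rw [← hD] at h2
        omega
      have hDle : (D.card : ℝ) ≤ G.cliqueNum := by
        exact_mod_cast card_le_cliqueNum' G hDclique
      rw [← hv] at hDcard
      -- combine over the reals
      have r1 : (C.card : ℝ) ≥ (G.minDegree : ℝ) + G.minDegree - (n - 2) := by
        have : (G.neighborFinset x ∪ G.neighborFinset y).card + 2 ≤ n := hunion
        have e1' : ((G.neighborFinset x ∪ G.neighborFinset y).card : ℝ) + C.card
            = G.degree x + G.degree y := by exact_mod_cast e1
        have h2 : ((G.neighborFinset x ∪ G.neighborFinset y).card : ℝ) + 2 ≤ n := by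
          exact_mod_cast this
        have hdx' : (G.minDegree : ℝ) ≤ G.degree x := by exact_mod_cast hdx
        have hdy' : (G.minDegree : ℝ) ≤ G.degree y := by exact_mod_cast hdy
        linarith
      have r2 : (D.card : ℝ) + (1 + G.minDegree) = n := by exact_mod_cast hDcard
      linarith
    · -- G is complete
      push_neg at hcomp
      have huniv : G.IsClique ((Finset.univ : Finset V) : Set V) := by
        intro p _ q _ hpq
        by_contra hne
        exact hne (hcomp p q hpq)
      have : n ≤ G.cliqueNum := by
        have := card_le_cliqueNum' G huniv
        rwa [Finset.card_univ, ← hn] at this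
      obtain ⟨v⟩ := ‹Nonempty V›
      have hd : G.minDegree ≤ n := le_trans (G.minDegree_le_degree v)
        (le_of_lt (by rw [hn]; exact G.degree_lt_card_verts v))
      have h1 : (n : ℝ) ≤ G.cliqueNum := by exact_mod_cast this
      have h2 : (G.minDegree : ℝ) ≤ n := by exact_mod_cast hd
      have hn0 : (0:ℝ) ≤ n := by positivity
      linarith
end

section
/- For every ε > 0, if G is a C4-free graph on n vertices with minimum degree at least δ, and G contains an independent set of size t ≥ (n² − δ²)/(ε δ²) + 1, then G contains a clique of size at least (1 − ε)δ²/n. -/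
open SimpleGraph
open scoped Classical

set_option maxHeartbeats 1000000 in
theorem stmt3 (ε : ℝ) (hε : 0 < ε) {V : Type*} [Fintype V] (G : SimpleGraph V)
    [DecidableRel G.Adj] (hC4 : IsC4Free G) (δ : ℕ) (hδ : δ ≤ G.minDegree)
    (S : Finset V) (hS : _root_.IsIndepSet G ↑S)
    (ht : ((Fintype.card V : ℝ) ^ 2 - (δ : ℝ) ^ 2) / (ε * (δ : ℝ) ^ 2) + 1 ≤ (S.card : ℝ)) :
    ∃ s : Finset V, G.IsClique ↑s ∧
      (1 - ε) * (δ : ℝ) ^ 2 / (Fintype.card V : ℝ) ≤ (s.card : ℝ) := by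
  classical
  set n : ℕ := Fintype.card V with hn
  by_cases hK : (1 - ε) * (δ : ℝ) ^ 2 / (n : ℝ) ≤ 0
  · exact ⟨∅, by simp, by simpa using hK⟩
  push_neg at hK
  -- positivity of parameters
  have hn0 : 0 < n := by
    rcases Nat.eq_zero_or_pos n with h | h
    · rw [h] at hK; simp at hK
    · exact h
  have hδ0 : 0 < δ := by
    rcases Nat.eq_zero_or_pos δ with h | h
    · rw [h] at hK; simp at hK
    · exact h
  have hε1 : ε < 1 := by
    by_contra h
    push_neg at h
    have : (1 - ε) * (δ : ℝ) ^ 2 / (n : ℝ) ≤ 0 := by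
      apply div_nonpos_of_nonpos_of_nonneg
      · nlinarith [sq_nonneg ((δ : ℝ))]
      · positivity
    linarith
  have hnR : (0:ℝ) < n := by exact_mod_cast hn0
  have hδR : (0:ℝ) < δ := by exact_mod_cast hδ0
  -- δ < n
  have hVne : Nonempty V := Fintype.card_pos_iff.mp hn0
  obtain ⟨v0⟩ := hVne
  have hδn : (δ : ℝ) < n := by
    have h1 : δ ≤ G.degree v0 := le_trans hδ (G.minDegree_le_degree v0)
    have h2 : G.degree v0 < n := G.degree_lt_card_verts v0
    exact_mod_cast lt_of_le_of_lt h1 h2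
  -- from ht : ε δ² (t-1) ≥ n² - δ²
  set t : ℕ := S.card with htdef
  have hεδ2 : (0:ℝ) < ε * (δ:ℝ)^2 := by positivity
  have hmain : (n:ℝ)^2 - (δ:ℝ)^2 ≤ ε * (δ:ℝ)^2 * ((t:ℝ) - 1) := by
    have := (div_le_iff₀ hεδ2).mp (by linarith [ht] : ((n : ℝ) ^ 2 - (δ : ℝ) ^ 2) / (ε * (δ : ℝ) ^ 2) ≤ (t:ℝ) - 1)
    linarith
  -- t ≥ 2
  have ht2 : 2 ≤ t := by
    by_contra h
    push_neg at h
    have : (t:ℝ) ≤ 1 := by exact_mod_cast Nat.lt_succ_iff.mp h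
    nlinarith
  -- the degree-in-S counting function
  set d : V → ℕ := fun v => (S.filter fun s => G.Adj s v).card with hd
  -- total count
  have hm1 : t * δ ≤ ∑ v : V, d v := by
    have hswap : ∑ v : V, d v = ∑ s ∈ S, G.degree s := by
      simp only [hd, Finset.card_filter]
      rw [Finset.sum_comm]
      refine Finset.sum_congr rfl fun s _ => ?_
      rw [SimpleGraph.degree, SimpleGraph.neighborFinset_eq_filter, Finset.card_filter]
    rw [hswap]
    calc t * δ = ∑ _s ∈ S, δ := by rw [Finset.sum_const, smul_eq_mul]
    _ ≤ ∑ s ∈ S, G.degree s :=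
      Finset.sum_le_sum fun s _ => le_trans hδ (G.minDegree_le_degree s)
  -- key identity
  have hId : ∑ p ∈ S.offDiag, (G.neighborFinset p.1 ∩ G.neighborFinset p.2).card
      = ∑ v : V, (d v * d v - d v) := by
    have h1 : ∀ p : V × V, (G.neighborFinset p.1 ∩ G.neighborFinset p.2).card
        = ∑ v : V, if G.Adj p.1 v ∧ G.Adj p.2 v then 1 else 0 := by
      intro p
      rw [← Finset.card_filter]
      congr 1
      ext v
      simp [SimpleGraph.mem_neighborFinset]
    calc ∑ p ∈ S.offDiag, (G.neighborFinset p.1 ∩ G.neighborFinset p.2).card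
        = ∑ p ∈ S.offDiag, ∑ v : V, if G.Adj p.1 v ∧ G.Adj p.2 v then 1 else 0 :=
          Finset.sum_congr rfl fun p _ => h1 p
      _ = ∑ v : V, ∑ p ∈ S.offDiag, if G.Adj p.1 v ∧ G.Adj p.2 v then 1 else 0 :=
          Finset.sum_comm
      _ = ∑ v : V, (d v * d v - d v) := by
          refine Finset.sum_congr rfl fun v _ => ?_
          rw [← Finset.card_filter]
          have : (S.offDiag.filter fun p => G.Adj p.1 v ∧ G.Adj p.2 v)
              = (S.filter fun s => G.Adj s v).offDiag := by
            ext ⟨a, b⟩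
            simp only [Finset.mem_filter, Finset.mem_offDiag]
            tauto
          rw [this, Finset.offDiag_card]
  -- cliques from common neighborhoods
  have hclique : ∀ p ∈ S.offDiag,
      G.IsClique ↑(G.neighborFinset p.1 ∩ G.neighborFinset p.2) := by
    rintro ⟨a, b⟩ hp
    rw [Finset.mem_offDiag] at hp
    obtain ⟨haS, hbS, hab⟩ := hp
    intro u hu w hw huw
    simp only [Finset.coe_inter, Set.mem_inter_iff, Finset.mem_coe,
      SimpleGraph.mem_neighborFinset] at hu hw
    by_contra hadj
    exact hC4 a u b w hab huw hu.1 hu.2.symm hw.2 hw.1.symm (hS haS hbS hab) hadj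
  -- contradiction setup
  by_contra hcon
  push_neg at hcon
  have hoffne : S.offDiag.Nonempty := by
    obtain ⟨a, haS, b, hbS, hab⟩ := Finset.one_lt_card_iff_nontrivial.mp (by omega : 1 < t)
    exact ⟨(a, b), Finset.mem_offDiag.mpr ⟨haS, hbS, hab⟩⟩
  set K : ℝ := (1 - ε) * (δ : ℝ) ^ 2 / (n : ℝ) with hKdef
  have hlt : ∑ p ∈ S.offDiag, ((G.neighborFinset p.1 ∩ G.neighborFinset p.2).card : ℝ)
      < (S.offDiag.card : ℝ) * K := by
    calc ∑ p ∈ S.offDiag, ((G.neighborFinset p.1 ∩ G.neighborFinset p.2).card : ℝ)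
        < ∑ _p ∈ S.offDiag, K := Finset.sum_lt_sum_of_nonempty hoffne
          fun p hp => hcon _ (hclique p hp)
      _ = (S.offDiag.card : ℝ) * K := by rw [Finset.sum_const, nsmul_eq_mul]
  -- real versions
  set M : ℝ := ∑ v : V, (d v : ℝ) with hM
  set Q : ℝ := ∑ v : V, (d v : ℝ)^2 with hQ
  have hIdR : ∑ p ∈ S.offDiag, ((G.neighborFinset p.1 ∩ G.neighborFinset p.2).card : ℝ)
      = Q - M := by
    rw [← Nat.cast_sum, hId, Nat.cast_sum, hM, hQ, ← Finset.sum_sub_distrib]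
    refine Finset.sum_congr rfl fun v _ => ?_
    have hle : d v ≤ d v * d v := by nlinarith [Nat.zero_le (d v)]
    rw [Nat.cast_sub hle]
    push_cast
    ring
  have hoffcard : (S.offDiag.card : ℝ) = (t:ℝ) * (t:ℝ) - t := by
    rw [Finset.offDiag_card, Nat.cast_sub (by nlinarith [Nat.zero_le t] : t ≤ t * t)]
    push_cast; ring
  have hCS : M ^ 2 ≤ (n : ℝ) * Q := by
    have := sq_sum_le_card_mul_sum_sq (s := (Finset.univ : Finset V)) (f := fun v => (d v : ℝ))
    simpa [hn, hM, hQ] using this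
  have hMge : (t:ℝ) * δ ≤ M := by
    rw [hM]; push_cast; exact_mod_cast hm1
  have htR : (2:ℝ) ≤ t := by exact_mod_cast ht2
  have htδn : (n:ℝ) ≤ (t:ℝ) * δ := by
    nlinarith [hmain,
      mul_nonneg (mul_nonneg (by linarith : (0:ℝ) ≤ (t:ℝ)) hδR.le)
        (by linarith : (0:ℝ) ≤ (n:ℝ) - δ),
      mul_nonneg (by linarith : (0:ℝ) ≤ 1 - ε)
        (mul_nonneg (sq_nonneg ((δ:ℝ))) (by linarith : (0:ℝ) ≤ (t:ℝ) - 1)),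
      hnR]
  -- final contradiction
  rw [hIdR, hoffcard] at hlt
  clear_value M Q K
  clear hId hIdR hclique hcon hS hC4 hδ ht hd hM hQ hm1 hoffne hoffcard
  have hbr : (n:ℝ) - δ ≤ ε * δ * ((t:ℝ) - 1) := by
    have h2 : ((n:ℝ) - δ) * δ ≤ (ε * δ * ((t:ℝ) - 1)) * δ := by
      nlinarith [hmain, mul_nonneg (by linarith : (0:ℝ) ≤ (n:ℝ) - δ) hnR.le]
    exact (mul_le_mul_iff_of_pos_right hδR).mp h2
  have h5 : (n:ℝ) * (((t:ℝ) * (t:ℝ) - (t:ℝ)) * K) = ((t:ℝ) * t - t) * ((1 - ε) * (δ:ℝ)^2) := by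
    rw [hKdef]; field_simp
  have h4 := mul_lt_mul_of_pos_left hlt hnR
  rw [h5] at h4
  have hE2 : (n:ℝ) * Q - (n:ℝ) * M < ((t:ℝ) * t - t) * ((1 - ε) * (δ:ℝ)^2) := by
    nlinarith [h4]
  have hE1 : ((t:ℝ) * t - t) * ((1 - ε) * (δ:ℝ)^2) ≤ M^2 - (n:ℝ) * M := by
    nlinarith [mul_nonneg (sub_nonneg.mpr hMge) (by linarith : (0:ℝ) ≤ M + (t:ℝ) * δ - n),
      mul_nonneg (mul_nonneg (by linarith : (0:ℝ) ≤ (t:ℝ)) hδR.le)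
        (by linarith : (0:ℝ) ≤ ε * δ * ((t:ℝ) - 1) - ((n:ℝ) - δ))]
  nlinarith [hCS, hE1, hE2]
end

section
/- For every ε > 0, if G is a C4-free graph on n vertices with minimum degree at least n/2 and G contains an independent set of size at least 3/ε + 1, then G contains a clique of size at least (1 − ε)n/4. -/
open SimpleGraph
open scoped Classical

/-- Double counting edges between `S` and the whole vertex set. -/
lemma swapA {V : Type*} [Fintype V] (G : SimpleGraph V) [DecidableRel G.Adj]
    (S : Finset V) :
    ∑ w : V, (S.filter (fun u => G.Adj w u)).card = ∑ u ∈ S, G.degree u := by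
  calc ∑ w : V, (S.filter (fun u => G.Adj w u)).card
      = ∑ w : V, ∑ u ∈ S, if G.Adj w u then 1 else 0 := by
        refine Finset.sum_congr rfl fun w _ => ?_
        rw [Finset.card_filter]
    _ = ∑ u ∈ S, ∑ w : V, if G.Adj w u then 1 else 0 := Finset.sum_comm
    _ = ∑ u ∈ S, G.degree u := by
        refine Finset.sum_congr rfl fun u _ => ?_
        rw [SimpleGraph.degree, SimpleGraph.neighborFinset_eq_filter, Finset.card_filter]
        simp [SimpleGraph.adj_comm]

/-- Double counting "cherries": pairs in `S` together with a common neighbor. -/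
lemma swapB {V : Type*} [Fintype V] (G : SimpleGraph V) [DecidableRel G.Adj]
    (S : Finset V) :
    ∑ p ∈ S.offDiag, (Finset.univ.filter (fun w => G.Adj p.1 w ∧ G.Adj p.2 w)).card
      = ∑ w : V, ((S.filter (fun u => G.Adj w u)).offDiag).card := by
  calc ∑ p ∈ S.offDiag, (Finset.univ.filter (fun w => G.Adj p.1 w ∧ G.Adj p.2 w)).card
      = ∑ p ∈ S.offDiag, ∑ w : V, if G.Adj p.1 w ∧ G.Adj p.2 w then 1 else 0 := by
        refine Finset.sum_congr rfl fun p _ => ?_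
        rw [Finset.card_filter]
    _ = ∑ w : V, ∑ p ∈ S.offDiag, if G.Adj p.1 w ∧ G.Adj p.2 w then 1 else 0 :=
        Finset.sum_comm
    _ = ∑ w : V, ((S.filter (fun u => G.Adj w u)).offDiag).card := by
        refine Finset.sum_congr rfl fun w _ => ?_
        rw [← Finset.card_filter]
        congr 1
        ext p
        simp only [Finset.mem_filter, Finset.mem_offDiag]
        constructor
        · rintro ⟨⟨h1, h2, h3⟩, h4, h5⟩
          exact ⟨⟨h1, h4.symm⟩, ⟨h2, h5.symm⟩, h3⟩
        · rintro ⟨⟨h1, h4⟩, ⟨h2, h5⟩, h3⟩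
          exact ⟨⟨h1, h2, h3⟩, h4.symm, h5.symm⟩

/-- The final arithmetic computation. -/
lemma c4free_arith (ε n s c D Sig : ℝ) (hε : 0 < ε) (hε1 : ε < 1) (hs4 : 4 ≤ s)
    (hsn : s ≤ n) (hD : s * (n / 2) ≤ D) (hCS : D ^ 2 ≤ n * (Sig + D))
    (hkey : Sig ≤ c * (s * s - s)) (hts : 3 / ε + 1 ≤ s) :
    (1 - ε) * n / 4 ≤ c := by
  have hn0 : (0 : ℝ) < n := by linarith
  have h2 : D * (D - n) ≤ n * Sig := by nlinarith [hCS]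
  have haux : (0:ℝ) ≤ D + s * n / 2 - n := by nlinarith
  have hD2 : (s * n / 2) * (s * n / 2 - n) ≤ D * (D - n) := by
    nlinarith [mul_nonneg (sub_nonneg.mpr (show s * n / 2 ≤ D by linarith)) haux]
  have h3 : n * n * s * (s - 2) / 4 ≤ n * Sig := by nlinarith [h2, hD2]
  have h4 : n * Sig ≤ n * (c * s * (s - 1)) := by nlinarith [hkey, hn0]
  have h5 : n * (s - 2) / 4 ≤ c * (s - 1) := by
    have hns : (0:ℝ) < n * s := by nlinarith
    have := le_of_mul_le_mul_left (a := n * s)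
      (show n * s * (n * (s - 2) / 4) ≤ n * s * (c * (s - 1)) by nlinarith [h3, h4]) hns
    linarith [this]
  have hεs : (3:ℝ) ≤ ε * (s - 1) := by
    have h := (div_le_iff₀ hε).mp (show 3 / ε ≤ s - 1 by linarith)
    nlinarith [h]
  have h6 : (1 - ε) * (s - 1) ≤ s - 2 := by nlinarith
  have hs1 : (0:ℝ) < s - 1 := by linarith
  have := le_of_mul_le_mul_right
    (show ((1 - ε) * n / 4) * (s - 1) ≤ c * (s - 1) by nlinarith [h5, h6, hn0]) hs1
  linarith [this]

theorem stmt4 (ε : ℝ) (hε : 0 < ε) {V : Type*} [Fintype V] (G : SimpleGraph V)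
    [DecidableRel G.Adj] (hC4 : IsC4Free G)
    (hδ : (Fintype.card V : ℝ) / 2 ≤ (G.minDegree : ℝ))
    (S : Finset V) (hS : _root_.IsIndepSet G ↑S) (ht : 3 / ε + 1 ≤ (S.card : ℝ)) :
    ∃ s : Finset V, G.IsClique ↑s ∧
      (1 - ε) * (Fintype.card V : ℝ) / 4 ≤ (s.card : ℝ) := by
  classical
  -- trivial case ε ≥ 1
  rcases le_or_gt 1 ε with hε1 | hε1
  · refine ⟨∅, by simp, ?_⟩
    have : (1 - ε) * (Fintype.card V : ℝ) ≤ 0 :=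
      mul_nonpos_of_nonpos_of_nonneg (by linarith) (by positivity)
    simp only [Finset.card_empty, Nat.cast_zero]
    linarith
  -- basic size facts
  have hs4 : (4 : ℝ) ≤ S.card := by
    have : (3 : ℝ) ≤ 3 / ε := by
      rw [le_div_iff₀ hε]; nlinarith
    linarith
  have hsn : S.card ≤ Fintype.card V := Finset.card_le_univ S
  have hs2 : 2 ≤ S.card := by exact_mod_cast le_trans (by norm_num : (2:ℝ) ≤ 4) hs4
  -- total degree into S
  have hDdeg : (S.card : ℝ) * ((Fintype.card V : ℝ) / 2)
      ≤ ∑ w : V, ((S.filter (fun u => G.Adj w u)).card : ℝ) := by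
    have h1 : ∀ u ∈ S, (Fintype.card V : ℝ) / 2 ≤ (G.degree u : ℝ) := fun u _ =>
      le_trans hδ (by exact_mod_cast G.minDegree_le_degree u)
    calc (S.card : ℝ) * ((Fintype.card V : ℝ) / 2)
        = ∑ _u ∈ S, (Fintype.card V : ℝ) / 2 := by rw [Finset.sum_const, nsmul_eq_mul]
      _ ≤ ∑ u ∈ S, (G.degree u : ℝ) := Finset.sum_le_sum h1
      _ = ∑ w : V, ((S.filter (fun u => G.Adj w u)).card : ℝ) := by
          rw [← Nat.cast_sum, ← Nat.cast_sum, swapA]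
  -- Cauchy–Schwarz
  have hCS : (∑ w : V, ((S.filter (fun u => G.Adj w u)).card : ℝ)) ^ 2
      ≤ (Fintype.card V : ℝ) *
        ((∑ w : V, (((S.filter (fun u => G.Adj w u)).offDiag).card : ℝ))
          + ∑ w : V, ((S.filter (fun u => G.Adj w u)).card : ℝ)) := by
    have h1 := sq_sum_le_card_mul_sum_sq (s := (Finset.univ : Finset V))
      (f := fun w => (((S.filter (fun u => G.Adj w u)).card : ℝ)))
    have h2 : ∑ w : V, ((S.filter (fun u => G.Adj w u)).card : ℝ) ^ 2
        = (∑ w : V, (((S.filter (fun u => G.Adj w u)).offDiag).card : ℝ))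
          + ∑ w : V, ((S.filter (fun u => G.Adj w u)).card : ℝ) := by
      rw [← Finset.sum_add_distrib]
      refine Finset.sum_congr rfl fun w _ => ?_
      have hle : (S.filter (fun u => G.Adj w u)).card
          ≤ (S.filter (fun u => G.Adj w u)).card * (S.filter (fun u => G.Adj w u)).card := by
        nlinarith [(S.filter (fun u => G.Adj w u)).card.zero_le]
      rw [Finset.offDiag_card]
      push_cast [Nat.cast_sub hle]
      ring
    calc (∑ w : V, ((S.filter (fun u => G.Adj w u)).card : ℝ)) ^ 2
        ≤ (Fintype.card V : ℝ) * ∑ w : V, ((S.filter (fun u => G.Adj w u)).card : ℝ) ^ 2 := by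
          simpa using h1
      _ = _ := by rw [h2]
  -- S.offDiag is nonempty
  have hSoff : S.offDiag.Nonempty := by
    obtain ⟨a, ha, b, hb, hab⟩ := Finset.one_lt_card.mp (by omega : 1 < S.card)
    exact ⟨(a, b), Finset.mem_offDiag.mpr ⟨ha, hb, hab⟩⟩
  have hoff0 : (0 : ℝ) < (S.offDiag.card : ℝ) := by
    exact_mod_cast Finset.card_pos.mpr hSoff
  -- find a good pair
  obtain ⟨p, hp, hple⟩ : ∃ p ∈ S.offDiag,
      (∑ w : V, (((S.filter (fun u => G.Adj w u)).offDiag).card : ℝ)) / (S.offDiag.card : ℝ)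
        ≤ ((Finset.univ.filter (fun w => G.Adj p.1 w ∧ G.Adj p.2 w)).card : ℝ) := by
    apply Finset.exists_le_of_sum_le hSoff
    rw [Finset.sum_const, nsmul_eq_mul, mul_div_cancel₀ _ (ne_of_gt hoff0)]
    rw [← Nat.cast_sum, ← Nat.cast_sum, swapB]
  obtain ⟨u, v⟩ := p
  rw [Finset.mem_offDiag] at hp
  obtain ⟨hu, hv, huv⟩ := hp
  have huvne : ¬G.Adj u v := hS hu hv huv
  refine ⟨Finset.univ.filter (fun w => G.Adj u w ∧ G.Adj v w), ?_, ?_⟩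
  · -- the common neighborhood of a non-adjacent pair is a clique
    intro x hx y hy hxy
    simp only [Finset.coe_filter, Set.mem_setOf_eq, Finset.mem_univ, true_and] at hx hy
    by_contra hadj
    exact hC4 x u y v hxy huv hx.1.symm hy.1 hy.2.symm hx.2 hadj huvne
  · -- arithmetic
    have hkey : (∑ w : V, (((S.filter (fun u => G.Adj w u)).offDiag).card : ℝ))
        ≤ ((Finset.univ.filter (fun w => G.Adj u w ∧ G.Adj v w)).card : ℝ)
          * ((S.card : ℝ) * (S.card : ℝ) - (S.card : ℝ)) := by
      have hoffcard : ((S.offDiag.card : ℝ)) = (S.card : ℝ) * (S.card : ℝ) - (S.card : ℝ) := by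
        have hle : S.card ≤ S.card * S.card := by nlinarith [S.card.zero_le]
        rw [Finset.offDiag_card]
        push_cast [Nat.cast_sub hle]
        ring
      have := (div_le_iff₀ hoff0).mp hple
      rw [hoffcard] at this
      exact this
    exact c4free_arith ε (Fintype.card V) (S.card : ℝ)
      ((Finset.univ.filter (fun w => G.Adj u w ∧ G.Adj v w)).card : ℝ)
      (∑ w : V, ((S.filter (fun u => G.Adj w u)).card : ℝ))
      (∑ w : V, (((S.filter (fun u => G.Adj w u)).offDiag).card : ℝ))
      hε hε1 hs4 (by exact_mod_cast hsn) hDdeg hCS hkey ht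
end

section
/- If G is a C4-free graph on n vertices whose independence number is at most 2, then ω(G) ≥ 2n/5. -/
open SimpleGraph
open scoped Classical

/-- Complement adjacency. -/
private def Hadj {V : Type*} (G : SimpleGraph V) (x y : V) : Prop := x ≠ y ∧ ¬G.Adj x y

private lemma Hadj.symm' {V : Type*} {G : SimpleGraph V} {x y : V} (h : Hadj G x y) :
    Hadj G y x := ⟨h.1.symm, fun a => h.2 a.symm⟩

private lemma adj_of_not_hadj {V : Type*} {G : SimpleGraph V} {x y : V}
    (hne : x ≠ y) (h : ¬Hadj G x y) : G.Adj x y := by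
  by_contra hn; exact h ⟨hne, hn⟩

/-- Case: the complement contains an induced `C5`. -/
private lemma caseC5 {V : Type*} [Fintype V] (G : SimpleGraph V)
    (hT : ∀ x y z, Hadj G x y → Hadj G x z → Hadj G y z → False)
    (hM : ∀ a b c d, Hadj G a b → Hadj G c d → G.Adj a c → G.Adj a d → G.Adj b c →
      G.Adj b d → False)
    (c : Fin 5 → V)
    (hcyc : ∀ i, Hadj G (c i) (c (i+1)))
    (hch : ∀ i, G.Adj (c i) (c (i+2))) :
    ∃ t : Finset V, G.IsClique (t : Set V) ∧ 2 * Fintype.card V ≤ 5 * t.card := by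
  classical
  -- index identities in `Fin 5`
  have e21 : ∀ i : Fin 5, i+2+1 = i+3 := by decide
  have e32 : ∀ i : Fin 5, i+3+2 = i := by decide
  have e24 : ∀ i : Fin 5, i+2+4 = i+1 := by decide
  have e41 : ∀ i : Fin 5, i+4+1 = i := by decide
  have e14 : ∀ i : Fin 5, i+1+4 = i := by decide
  have e44 : ∀ i : Fin 5, i+4+4 = i+3 := by decide
  have e15 : ∀ i : Fin 5, i+1+1 = i+2 := by decide
  have e31 : ∀ i : Fin 5, i+3+1 = i+4 := by decide
  set S : Finset V := Finset.univ.filter (fun w => ∀ z, ¬Hadj G w z) with hS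
  set W : Fin 5 → Finset V :=
    fun i => Finset.univ.filter (fun w => Hadj G w (c (i+4)) ∧ Hadj G w (c (i+1))) with hW
  set K : Fin 5 → Finset V := fun i => W i ∪ W (i+2) ∪ S with hK
  have hWmem : ∀ i w, w ∈ W i ↔ (Hadj G w (c (i+4)) ∧ Hadj G w (c (i+1))) := by
    intro i w; simp [hW]
  have hSmem : ∀ w, w ∈ S ↔ ∀ z, ¬Hadj G w z := by intro w; simp [hS]
  -- each K i is a clique of G
  have hKclique : ∀ i, G.IsClique ((K i : Finset V) : Set V) := by
    intro i x hx y hy hne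
    by_contra hadj
    have hxy : Hadj G x y := ⟨hne, hadj⟩
    simp only [hK, Finset.coe_union, Set.mem_union, Finset.mem_coe] at hx hy
    rcases hx with (hx | hxS)
    · rcases hy with (hy | hyS)
      · -- both adjacent to c (i+1) : triangle
        have hx1 : Hadj G x (c (i+1)) := by
          rcases hx with (hx | hx)
          · exact ((hWmem i x).1 hx).2
          · have := ((hWmem (i+2) x).1 hx).1
            rwa [e24 i] at this
        have hy1 : Hadj G y (c (i+1)) := by
          rcases hy with (hy | hy)
          · exact ((hWmem i y).1 hy).2
          · have := ((hWmem (i+2) y).1 hy).1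
            rwa [e24 i] at this
        exact hT x y (c (i+1)) hxy hx1 hy1
      · exact ((hSmem y).1 hyS) x hxy.symm'
    · exact ((hSmem x).1 hxS) y hxy
  -- propagation: a vertex off the cycle adjacent to c i is adjacent to c (i+2) or c (i+3)
  have prop : ∀ x, (∀ j, x ≠ c j) → ∀ i, Hadj G x (c i) →
      Hadj G x (c (i+2)) ∨ Hadj G x (c (i+3)) := by
    intro x hx i hxi
    by_contra h
    push_neg at h
    have h2 : G.Adj x (c (i+2)) := adj_of_not_hadj (hx _) h.1
    have h3 : G.Adj x (c (i+3)) := adj_of_not_hadj (hx _) h.2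
    have hcy : Hadj G (c (i+2)) (c (i+3)) := by have := hcyc (i+2); rwa [e21 i] at this
    have hchi3 : G.Adj (c i) (c (i+3)) := by
      have := hch (i+3); rw [e32 i] at this; exact this.symm
    exact hM x (c i) (c (i+2)) (c (i+3)) hxi hcy h2 h3 (hch i) hchi3
  -- classification
  have hclass : ∀ w, w ∈ S ∨ ∃ i, w ∈ W i := by
    intro w
    by_cases hS0 : ∀ z, ¬Hadj G w z
    · exact Or.inl ((hSmem w).2 hS0)
    right
    push_neg at hS0
    obtain ⟨z, hz⟩ := hS0
    by_cases hwc : ∃ j, w = c j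
    · obtain ⟨j, rfl⟩ := hwc
      refine ⟨j, (hWmem j (c j)).2 ⟨?_, hcyc j⟩⟩
      have := hcyc (j+4); rw [e41 j] at this; exact this.symm'
    push_neg at hwc
    by_cases hadjsome : ∃ i, Hadj G w (c i)
    · obtain ⟨i, hi⟩ := hadjsome
      rcases prop w hwc i hi with hp | hp
      · exact ⟨i+1, (hWmem (i+1) w).2 ⟨by rwa [e14 i], by rwa [e15 i]⟩⟩
      · exact ⟨i+4, (hWmem (i+4) w).2 ⟨by rwa [e44 i], by rwa [e41 i]⟩⟩
    push_neg at hadjsome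
    exfalso
    -- w is adjacent (in G) to the whole cycle
    have hwG : ∀ j, G.Adj w (c j) := fun j => adj_of_not_hadj (hwc j) (hadjsome j)
    have hzc : ∀ j, z ≠ c j := by
      intro j hj; exact hadjsome j (hj ▸ hz)
    by_cases hz2 : ∃ i, Hadj G z (c i)
    · obtain ⟨i, hi⟩ := hz2
      rcases prop z hzc i hi with hp | hp
      · -- z ~ c i, c (i+2); avoided edge (c (i+3), c (i+4))
        have hz3 : G.Adj z (c (i+3)) := by
          refine adj_of_not_hadj (hzc _) (fun hcon => ?_)
          have hcy : Hadj G (c (i+2)) (c (i+3)) := by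
            have := hcyc (i+2); rwa [e21 i] at this
          exact hT z (c (i+2)) (c (i+3)) hp hcon hcy
        have hz4 : G.Adj z (c (i+4)) := by
          refine adj_of_not_hadj (hzc _) (fun hcon => ?_)
          have hcy : Hadj G (c (i+4)) (c i) := by have := hcyc (i+4); rwa [e41 i] at this
          exact hT z (c (i+4)) (c i) hcon hi hcy
        have hcy : Hadj G (c (i+3)) (c (i+4)) := by
          have := hcyc (i+3); rwa [e31 i] at this
        exact hM w z (c (i+3)) (c (i+4)) hz hcy (hwG _) (hwG _) hz3 hz4
      · -- z ~ c i, c (i+3); avoided edge (c (i+1), c (i+2))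
        have hz1 : G.Adj z (c (i+1)) := by
          refine adj_of_not_hadj (hzc _) (fun hcon => ?_)
          exact hT z (c i) (c (i+1)) hi hcon (hcyc i)
        have hz2' : G.Adj z (c (i+2)) := by
          refine adj_of_not_hadj (hzc _) (fun hcon => ?_)
          have hcy : Hadj G (c (i+2)) (c (i+3)) := by
            have := hcyc (i+2); rwa [e21 i] at this
          exact hT z (c (i+2)) (c (i+3)) hcon hp hcy
        have hcy : Hadj G (c (i+1)) (c (i+2)) := by
          have := hcyc (i+1); rwa [e15 i] at this
        exact hM w z (c (i+1)) (c (i+2)) hz hcy (hwG _) (hwG _) hz1 hz2'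
    · push_neg at hz2
      have hzG : ∀ j, G.Adj z (c j) := fun j => adj_of_not_hadj (hzc j) (hz2 j)
      exact hM w z (c 0) (c 1) hz (hcyc 0) (hwG 0) (hwG 1) (hzG 0) (hzG 1)
  -- every vertex lies in at least two of the K i
  have htwo : ∀ w : V, ∃ i j : Fin 5, i ≠ j ∧ w ∈ K i ∧ w ∈ K j := by
    intro w
    rcases hclass w with hw | ⟨j, hw⟩
    · exact ⟨0, 1, by decide,
        Finset.mem_union_right _ hw, Finset.mem_union_right _ hw⟩
    · have hne5 : ∀ k : Fin 5, k ≠ k + 3 := by decide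
      refine ⟨j, j+3, hne5 j, ?_, ?_⟩
      · exact Finset.mem_union_left _ (Finset.mem_union_left _ hw)
      · refine Finset.mem_union_left _ (Finset.mem_union_right _ ?_)
        rwa [e32 j]
  -- double counting
  have hsum : 2 * Fintype.card V ≤ ∑ i : Fin 5, (K i).card := by
    have step1 : ∀ i, (K i).card = ∑ w : V, if w ∈ K i then 1 else 0 := by
      intro i
      rw [Finset.sum_boole]
      simp [Finset.filter_mem_eq_inter]
    calc 2 * Fintype.card V = ∑ _w : V, 2 := by
          rw [Finset.sum_const, Finset.card_univ, smul_eq_mul, mul_comm]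
      _ ≤ ∑ w : V, ∑ i : Fin 5, if w ∈ K i then 1 else 0 := by
          refine Finset.sum_le_sum (fun w _ => ?_)
          obtain ⟨i, j, hij, hwi, hwj⟩ := htwo w
          have : ({i, j} : Finset (Fin 5)) ⊆ Finset.univ.filter (fun k => w ∈ K k) := by
            intro k hk
            simp only [Finset.mem_insert, Finset.mem_singleton] at hk
            rcases hk with rfl | rfl <;> simp [hwi, hwj]
          have hcard : 2 ≤ (Finset.univ.filter (fun k => w ∈ K k)).card := by
            have := Finset.card_le_card this
            rwa [Finset.card_insert_of_notMem (by simpa using hij),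
              Finset.card_singleton] at this
          calc 2 ≤ (Finset.univ.filter (fun k => w ∈ K k)).card := hcard
            _ = ∑ i : Fin 5, if w ∈ K i then 1 else 0 := by
                simp [Finset.sum_boole]
      _ = ∑ i : Fin 5, (K i).card := by
          rw [Finset.sum_comm]
          exact Finset.sum_congr rfl (fun i _ => (step1 i).symm)
  -- extract a big clique
  have hbig : ∃ i : Fin 5, 2 * Fintype.card V ≤ 5 * (K i).card := by
    by_contra h
    push_neg at h
    have h1 : ∑ i : Fin 5, 5 * (K i).card < ∑ _i : Fin 5, 2 * Fintype.card V :=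
      Finset.sum_lt_sum_of_nonempty (by simp) (fun i _ => h i)
    rw [← Finset.mul_sum] at h1
    simp only [Finset.sum_const, Finset.card_univ, Fintype.card_fin, smul_eq_mul] at h1
    omega
  obtain ⟨i, hi⟩ := hbig
  exact ⟨K i, hKclique i, hi⟩

/-- Case: the complement contains no induced `C5` (but has an edge). -/
private lemma caseNoC5 {V : Type*} [Fintype V] (G : SimpleGraph V)
    (hT : ∀ x y z, Hadj G x y → Hadj G x z → Hadj G y z → False)
    (hM : ∀ a b c d, Hadj G a b → Hadj G c d → G.Adj a c → G.Adj a d → G.Adj b c →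
      G.Adj b d → False)
    {u v : V} (huv : Hadj G u v)
    (hnoC5 : ¬ ∃ c : Fin 5 → V, (∀ i, Hadj G (c i) (c (i+1))) ∧
      (∀ i, G.Adj (c i) (c (i+2)))) :
    ∃ t : Finset V, G.IsClique (t : Set V) ∧ Fintype.card V ≤ 2 * t.card := by
  classical
  set isI : V → Prop := fun w => ¬Hadj G w u ∧ ¬Hadj G w v ∧ w ≠ u ∧ w ≠ v with hisI
  set P : Finset V := Finset.univ.filter
    (fun w => w = u ∨ Hadj G w v ∨ (isI w ∧ ¬ ∃ b, Hadj G b v ∧ Hadj G w b)) with hP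
  set Q : Finset V := Finset.univ.filter
    (fun w => w = v ∨ Hadj G w u ∨ (isI w ∧ ∃ b, Hadj G b v ∧ Hadj G w b)) with hQ
  have hPmem : ∀ w, w ∈ P ↔ (w = u ∨ Hadj G w v ∨ (isI w ∧ ¬ ∃ b, Hadj G b v ∧ Hadj G w b)) := by
    intro w; simp [hP]
  have hQmem : ∀ w, w ∈ Q ↔ (w = v ∨ Hadj G w u ∨ (isI w ∧ ∃ b, Hadj G b v ∧ Hadj G w b)) := by
    intro w; simp [hQ]
  -- cover
  have hcover : ∀ w : V, w ∈ P ∨ w ∈ Q := by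
    intro w
    by_cases h1 : w = u
    · exact Or.inl ((hPmem w).2 (Or.inl h1))
    by_cases h2 : w = v
    · exact Or.inr ((hQmem w).2 (Or.inl h2))
    by_cases h3 : Hadj G w u
    · exact Or.inr ((hQmem w).2 (Or.inr (Or.inl h3)))
    by_cases h4 : Hadj G w v
    · exact Or.inl ((hPmem w).2 (Or.inr (Or.inl h4)))
    have hI : isI w := ⟨h3, h4, h1, h2⟩
    by_cases h5 : ∃ b, Hadj G b v ∧ Hadj G w b
    · exact Or.inr ((hQmem w).2 (Or.inr (Or.inr ⟨hI, h5⟩)))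
    · exact Or.inl ((hPmem w).2 (Or.inr (Or.inr ⟨hI, h5⟩)))
  -- P is a clique
  have hPclique : G.IsClique ((P : Finset V) : Set V) := by
    intro x hx y hy hne
    by_contra hadj
    have hxy : Hadj G x y := ⟨hne, hadj⟩
    simp only [Finset.mem_coe] at hx hy
    rw [hPmem] at hx hy
    -- symmetric case bash
    have key : ∀ a b : V, Hadj G a b →
        (b = u ∨ Hadj G b v ∨ (isI b ∧ ¬ ∃ c, Hadj G c v ∧ Hadj G b c)) →
        (a = u ∨ Hadj G a v) → False := by
      intro a b hab hb hau
      rcases hb with hbu | hbv | ⟨hbI, hbN⟩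
      · -- b = u
        rcases hau with hau' | hav
        · exact hab.1 (hau'.trans hbu.symm)
        · exact hT a u v (hbu ▸ hab) hav huv
      · rcases hau with hau' | hav
        · exact hT u b v (hau' ▸ hab) huv hbv
        · exact hT a b v hab hav hbv
      · -- b is an I vertex with no B-neighbour
        rcases hau with hau' | hav
        · exact hbI.1 (hau' ▸ hab).symm'
        · exact hbN ⟨a, hav, hab.symm'⟩
    rcases hx with hx' | hx' | ⟨hxI, hxN⟩
    · exact key x y hxy hy (Or.inl hx')
    · exact key x y hxy hy (Or.inr hx')
    · rcases hy with hy' | hy' | ⟨hyI, hyN⟩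
      · exact key y x hxy.symm' (Or.inr (Or.inr ⟨hxI, hxN⟩)) (Or.inl hy')
      · exact key y x hxy.symm' (Or.inr (Or.inr ⟨hxI, hxN⟩)) (Or.inr hy')
      · -- both in I : 2K2 with the edge uv
        exact hM x y u v hxy huv
          (adj_of_not_hadj hxI.2.2.1 hxI.1) (adj_of_not_hadj hxI.2.2.2 hxI.2.1)
          (adj_of_not_hadj hyI.2.2.1 hyI.1) (adj_of_not_hadj hyI.2.2.2 hyI.2.1)
  -- Q is a clique
  have hQclique : G.IsClique ((Q : Finset V) : Set V) := by
    intro x hx y hy hne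
    by_contra hadj
    have hxy : Hadj G x y := ⟨hne, hadj⟩
    simp only [Finset.mem_coe] at hx hy
    rw [hQmem] at hx hy
    have key : ∀ a b : V, Hadj G a b →
        (a = v ∨ Hadj G a u) →
        (b = v ∨ Hadj G b u ∨ (isI b ∧ ∃ c, Hadj G c v ∧ Hadj G b c)) → False := by
      intro a b hab ha hb
      rcases hb with hbv | hbu | ⟨hbI, bb, hbbv, hbb⟩
      · rcases ha with hav | hau
        · exact hab.1 (hav.trans hbv.symm)
        · exact hT a u v hau (hbv ▸ hab) huv
      · rcases ha with hav | hau
        · exact hT b u v hbu ((hav ▸ hab).symm') huv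
        · exact hT a b u hab hau hbu
      · rcases ha with hav | hau
        · exact hbI.2.1 ((hav ▸ hab).symm')
        · -- a ∈ A = N_H(u), b I-vertex with B-neighbour bb, a ~H b : build induced C5
          -- C5 : a, u, v, bb, b
          apply hnoC5
          have hav : a ≠ v := by
            intro h; subst h; exact hbI.2.1 hab.symm'
          have havG : G.Adj a v := by
            refine adj_of_not_hadj hav (fun hcon => ?_)
            exact hT a u v hau hcon huv
          have hbbu : bb ≠ u := by
            intro h; subst h; exact hbI.1 hbb
          have hbbuG : G.Adj u bb := by
            refine adj_of_not_hadj (Ne.symm hbbu) (fun hcon => ?_)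
            exact hT u bb v hcon huv hbbv
          have hvbG : G.Adj v b := adj_of_not_hadj (Ne.symm hbI.2.2.2)
            (fun hcon => hbI.2.1 hcon.symm')
          have habb : a ≠ bb := by
            intro h; exact hT a u v hau (by rw [h]; exact hbbv) huv
          have hbbaG : G.Adj bb a := by
            refine adj_of_not_hadj (Ne.symm habb) (fun hcon => ?_)
            exact hT a b bb hab hcon.symm' hbb
          have hbuG : G.Adj b u := adj_of_not_hadj hbI.2.2.1 hbI.1
          refine ⟨![a, u, v, bb, b], ?_, ?_⟩
          · intro i
            fin_cases i
            · exact hau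
            · exact huv
            · exact hbbv.symm'
            · exact hbb.symm'
            · exact hab.symm'
          · intro i
            fin_cases i
            · exact havG
            · exact hbbuG
            · exact hvbG
            · exact hbbaG
            · exact hbuG
    rcases hx with hx' | hx' | ⟨hxI, hxE⟩
    · exact key x y hxy (Or.inl hx') hy
    · exact key x y hxy (Or.inr hx') hy
    · rcases hy with hy' | hy' | ⟨hyI, hyE⟩
      · exact key y x hxy.symm' (Or.inl hy') (Or.inr (Or.inr ⟨hxI, hxE⟩))
      · exact key y x hxy.symm' (Or.inr hy') (Or.inr (Or.inr ⟨hxI, hxE⟩))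
      · exact hM x y u v hxy huv
          (adj_of_not_hadj hxI.2.2.1 hxI.1) (adj_of_not_hadj hxI.2.2.2 hxI.2.1)
          (adj_of_not_hadj hyI.2.2.1 hyI.1) (adj_of_not_hadj hyI.2.2.2 hyI.2.1)
  -- counting
  have hcard : Fintype.card V ≤ P.card + Q.card := by
    have hsub : (Finset.univ : Finset V) ⊆ P ∪ Q := by
      intro w _
      rcases hcover w with h | h
      · exact Finset.mem_union_left _ h
      · exact Finset.mem_union_right _ h
    calc Fintype.card V = (Finset.univ : Finset V).card := by rw [Finset.card_univ]
      _ ≤ (P ∪ Q).card := Finset.card_le_card hsub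
      _ ≤ P.card + Q.card := Finset.card_union_le _ _
  rcases le_total P.card Q.card with h | h
  · exact ⟨Q, hQclique, by omega⟩
  · exact ⟨P, hPclique, by omega⟩

theorem stmt5 {V : Type*} [Fintype V] (G : SimpleGraph V)
    (hC4 : IsC4Free G) (hα : _root_.indepNum G ≤ 2) :
    (G.cliqueNum : ℝ) ≥ 2 * (Fintype.card V : ℝ) / 5 := by
  classical
  -- triangle-freeness of the complement
  have hT : ∀ x y z, Hadj G x y → Hadj G x z → Hadj G y z → False := by
    intro x y z hxy hxz hyz
    have hclique : Gᶜ.IsClique ({x, y, z} : Finset V) := by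
      intro a ha b hb hne
      simp only [Finset.coe_insert, Set.mem_insert_iff, Finset.coe_singleton,
        Set.mem_singleton_iff] at ha hb
      rw [compl_adj]
      rcases ha with rfl | rfl | rfl <;> rcases hb with rfl | rfl | rfl <;>
        first
          | exact absurd rfl hne
          | exact ⟨hxy.1, hxy.2⟩
          | exact ⟨hxy.1.symm, fun h => hxy.2 h.symm⟩
          | exact ⟨hxz.1, hxz.2⟩
          | exact ⟨hxz.1.symm, fun h => hxz.2 h.symm⟩
          | exact ⟨hyz.1, hyz.2⟩
          | exact ⟨hyz.1.symm, fun h => hyz.2 h.symm⟩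
    have hcard : ({x, y, z} : Finset V).card = 3 := by
      rw [Finset.card_insert_of_notMem (by simp [hxy.1, hxz.1]),
        Finset.card_insert_of_notMem (by simp [hyz.1]), Finset.card_singleton]
    have h3 : 3 ≤ Gᶜ.cliqueNum := by
      have := SimpleGraph.IsClique.card_le_cliqueNum (G := Gᶜ) (t := {x, y, z})
        (tc := hclique)
      omega
    have : Gᶜ.cliqueNum ≤ 2 := hα
    omega
  -- 2K2-freeness of the complement
  have hM : ∀ a b c d, Hadj G a b → Hadj G c d → G.Adj a c → G.Adj a d → G.Adj b c →
      G.Adj b d → False := by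
    intro a b c d hab hcd hac had hbc hbd
    exact hC4 a c b d hab.1 hcd.1 hac hbc.symm hbd had.symm hab.2 hcd.2
  -- get a clique t and a bound 2n ≤ 5 |t|
  have main : ∃ t : Finset V, G.IsClique (t : Set V) ∧ 2 * Fintype.card V ≤ 5 * t.card := by
    by_cases hcomplete : ∀ x y : V, x ≠ y → G.Adj x y
    · refine ⟨Finset.univ, ?_, ?_⟩
      · intro x _ y _ hne; exact hcomplete x y hne
      · rw [Finset.card_univ]; omega
    · push_neg at hcomplete
      obtain ⟨u, v, huvne, huvadj⟩ := hcomplete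
      have huv : Hadj G u v := ⟨huvne, huvadj⟩
      by_cases hC5 : ∃ c : Fin 5 → V, (∀ i, Hadj G (c i) (c (i+1))) ∧
          (∀ i, G.Adj (c i) (c (i+2)))
      · obtain ⟨c, hcyc, hch⟩ := hC5
        exact caseC5 G hT hM c hcyc hch
      · obtain ⟨t, ht, hcard⟩ := caseNoC5 G hT hM huv hC5
        exact ⟨t, ht, by omega⟩
  obtain ⟨t, ht, hcard⟩ := main
  have h1 : t.card ≤ G.cliqueNum :=
    SimpleGraph.IsClique.card_le_cliqueNum (G := G) (t := t) (tc := ht)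
  rw [ge_iff_le, div_le_iff₀ (by norm_num : (0:ℝ) < 5)]
  have h2 : (2 * Fintype.card V : ℝ) ≤ 5 * t.card := by exact_mod_cast hcard
  have h3 : (t.card : ℝ) ≤ G.cliqueNum := by exact_mod_cast h1
  linarith
end

section
/- If G is a C4-free graph with independence number at most 2, then either the complement of G is bipartite, or G can be obtained from the 5-wheel W5 by substituting a (possibly empty) clique for each vertex. -/
open SimpleGraph
open scoped Classical

/-- The 5-wheel: a 5-cycle on `0,…,4` together with the hub `5` adjacent to all of them. -/
def W5 : SimpleGraph (Fin 6) :=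
  SimpleGraph.fromRel (fun i j => i = 5 ∨ j = 5 ∨ ((i : ℕ) + 1) % 5 = (j : ℕ) ∧ (i : ℕ) < 5 ∧ (j : ℕ) < 5)

/- ### Auxiliary material -/

instance : DecidableRel W5.Adj := fun a b =>
  decidable_of_iff _ (SimpleGraph.fromRel_adj _ a b).symm

def em5 : Fin 5 → Fin 6 := Fin.castLE (by omega)

def relabel : Fin 6 → Fin 6 := ![0, 2, 4, 1, 3, 5]

def Dnext : Fin 6 → Fin 6 → Prop := fun a b =>
  ∃ k l : Fin 5, a = em5 k ∧ b = em5 l ∧ (l = k + 1 ∨ k = l + 1)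

instance : DecidableRel Dnext := fun _ _ => by unfold Dnext; infer_instance

lemma relabel_decide : ∀ a b : Fin 6,
    (¬ Dnext a b) ↔ (relabel a = relabel b ∨ W5.Adj (relabel a) (relabel b)) := by decide

lemma em5_inj : ∀ k l : Fin 5, em5 k = em5 l → k = l := by decide

lemma em5_ne5 : ∀ k : Fin 5, em5 k ≠ 5 := by decide

lemma fin5_cases : ∀ j k : Fin 5, j = k ∨ j = k + 1 ∨ j = k + 2 ∨ j = k + 3 ∨ j = k + 4 := by
  decide

lemma fin5_cover : ∀ S : Finset (Fin 5),
    (∀ i, i ∈ S ∨ i + 1 ∈ S) → ∃ i, i ∈ S ∧ i + 1 ∈ S := by decide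

lemma c5_case {V : Type*} (H : SimpleGraph V)
    (hT : ∀ a b c : V, H.Adj a b → H.Adj a c → H.Adj b c → False)
    (h2 : ∀ a b c d : V, H.Adj a b → H.Adj c d → ¬H.Adj a c → ¬H.Adj a d →
      ¬H.Adj b c → ¬H.Adj b d → a ≠ c → a ≠ d → b ≠ c → b ≠ d → False)
    (hc5 : ∃ v0 v1 v2 v3 v4 : V,
      H.Adj v0 v1 ∧ H.Adj v1 v2 ∧ H.Adj v2 v3 ∧ H.Adj v3 v4 ∧ H.Adj v4 v0 ∧
      ¬H.Adj v0 v2 ∧ ¬H.Adj v0 v3 ∧ ¬H.Adj v1 v3 ∧ ¬H.Adj v1 v4 ∧ ¬H.Adj v2 v4) :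
      ∃ f : V → Fin 6, ∀ u w : V, u ≠ w →
        (¬H.Adj u w ↔ (f u = f w ∨ W5.Adj (f u) (f w))) := by
  obtain ⟨v0, v1, v2, v3, v4, h01, h12, h23, h34, h40, n02, n03, n13, n14, n24⟩ := hc5
  set v : Fin 5 → V := ![v0, v1, v2, v3, v4] with hv
  have hcyc : ∀ i j : Fin 5, H.Adj (v i) (v j) ↔ (j = i + 1 ∨ i = j + 1) := by
    clear hT h2
    intro i j
    fin_cases i <;> fin_cases j <;> simp_all [v, SimpleGraph.adj_comm H]
  clear h01 h12 h23 h34 h40 n02 n03 n13 n14 n24 hv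
  -- basic cycle facts
  have cycAdj : ∀ i j : Fin 5, (j = i + 1 ∨ i = j + 1) → H.Adj (v i) (v j) :=
    fun i j h => (hcyc i j).mpr h
  have cycNadj : ∀ i j : Fin 5, j ≠ i + 1 → i ≠ j + 1 → ¬H.Adj (v i) (v j) :=
    fun i j h1 h2 h => ((hcyc i j).mp h).elim h1 h2
  have hvinj : ∀ i j : Fin 5, v i = v j → i = j := by
    intro i j hij
    have ha1 : H.Adj (v i) (v (j + 1)) := by
      rw [hij]; exact cycAdj j (j + 1) (Or.inl rfl)
    have ha2 : H.Adj (v i) (v (j + 4)) := by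
      rw [hij]
      exact cycAdj j (j + 4) (Or.inr ((by decide : ∀ j : Fin 5, j = j + 4 + 1) j))
    have e1 := (hcyc i (j + 1)).mp ha1
    have e2 := (hcyc i (j + 4)).mp ha2
    exact (by decide : ∀ i j : Fin 5, (j + 1 = i + 1 ∨ i = j + 1 + 1) →
      (j + 4 = i + 1 ∨ i = j + 4 + 1) → i = j) i j e1 e2
  -- `u` belongs to class `k` if it is adjacent to `v (k+1)` and `v (k+4)`.
  -- if `u` is in class `k` then its only neighbours on the cycle are `v (k+1)`, `v (k+4)`
  have hnotk : ∀ (k : Fin 5) (u : V), H.Adj u (v (k + 1)) → H.Adj u (v (k + 4)) →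
      ∀ j, H.Adj u (v j) → j = k + 1 ∨ j = k + 4 := by
    intro k u hk1 hk4 j hj
    rcases fin5_cases j k with h | h | h | h | h
    · rw [h] at hj
      exact (hT u (v k) (v (k + 1)) hj hk1 (cycAdj _ _ (Or.inl rfl))).elim
    · exact Or.inl h
    · rw [h] at hj
      exact (hT u (v (k + 1)) (v (k + 2)) hk1 hj
        (cycAdj _ _ (Or.inl ((by decide : ∀ k : Fin 5, k + 2 = k + 1 + 1) k)))).elim
    · rw [h] at hj
      exact (hT u (v (k + 3)) (v (k + 4)) hj hk4
        (cycAdj _ _ (Or.inl ((by decide : ∀ k : Fin 5, k + 4 = k + 3 + 1) k)))).elim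
    · exact Or.inr h
  -- every vertex is in some class or is isolated
  have htot : ∀ u : V, (∃ k : Fin 5, H.Adj u (v (k + 1)) ∧ H.Adj u (v (k + 4))) ∨
      (∀ w, ¬H.Adj u w) := by
    intro u
    by_cases hn : ∃ w, H.Adj u w
    · left
      obtain ⟨w, huw⟩ := hn
      by_cases hcv : ∃ i, H.Adj u (v i)
      · obtain ⟨i, hi⟩ := hcv
        by_cases h2v : ∃ j, j ≠ i ∧ H.Adj u (v j)
        · obtain ⟨j, hji, hj⟩ := h2v
          rcases fin5_cases j i with h | h | h | h | h
          · exact (hji h).elim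
          · rw [h] at hj
            exact (hT u (v i) (v (i + 1)) hi hj (cycAdj _ _ (Or.inl rfl))).elim
          · rw [h] at hj
            refine ⟨i + 1, ?_, ?_⟩
            · rwa [(by decide : ∀ i : Fin 5, i + 1 + 1 = i + 2) i]
            · rwa [(by decide : ∀ i : Fin 5, i + 1 + 4 = i) i]
          · rw [h] at hj
            refine ⟨i + 4, ?_, ?_⟩
            · rwa [(by decide : ∀ i : Fin 5, i + 4 + 1 = i) i]
            · rwa [(by decide : ∀ i : Fin 5, i + 4 + 4 = i + 3) i]
          · rw [h] at hj
            exact (hT u (v (i + 4)) (v i) hj hi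
              (cycAdj _ _ (Or.inl ((by decide : ∀ i : Fin 5, i = i + 4 + 1) i)))).elim
        · push_neg at h2v
          -- u is adjacent to exactly one cycle vertex: 2K2 with the opposite edge
          have hu2 : ¬H.Adj u (v (i + 2)) :=
            h2v (i + 2) ((by decide : ∀ i : Fin 5, i + 2 ≠ i) i)
          have hu3 : ¬H.Adj u (v (i + 3)) :=
            h2v (i + 3) ((by decide : ∀ i : Fin 5, i + 3 ≠ i) i)
          have hne2 : u ≠ v (i + 2) := by
            intro h; rw [h] at hi
            exact cycNadj (i + 2) i ((by decide : ∀ i : Fin 5, i ≠ i + 2 + 1) i)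
              ((by decide : ∀ i : Fin 5, i + 2 ≠ i + 1) i) hi
          have hne3 : u ≠ v (i + 3) := by
            intro h; rw [h] at hi
            exact cycNadj (i + 3) i ((by decide : ∀ i : Fin 5, i ≠ i + 3 + 1) i)
              ((by decide : ∀ i : Fin 5, i + 3 ≠ i + 1) i) hi
          exact (h2 u (v i) (v (i + 2)) (v (i + 3)) hi
            (cycAdj _ _ (Or.inl ((by decide : ∀ i : Fin 5, i + 3 = i + 2 + 1) i)))
            hu2 hu3
            (cycNadj i (i + 2) ((by decide : ∀ i : Fin 5, i + 2 ≠ i + 1) i)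
              ((by decide : ∀ i : Fin 5, i ≠ i + 2 + 1) i))
            (cycNadj i (i + 3) ((by decide : ∀ i : Fin 5, i + 3 ≠ i + 1) i)
              ((by decide : ∀ i : Fin 5, i ≠ i + 3 + 1) i))
            hne2 hne3
            (fun h => ((by decide : ∀ i : Fin 5, i ≠ i + 2) i) (hvinj _ _ h))
            (fun h => ((by decide : ∀ i : Fin 5, i ≠ i + 3) i) (hvinj _ _ h))).elim
      · push_neg at hcv
        -- u has no neighbour on the cycle; w cannot cover all cycle edges
        have hwv : ∀ j, w ≠ v j := by
          intro j h; rw [h] at huw; exact hcv j huw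
        have hwcov : ∃ i, ¬H.Adj w (v i) ∧ ¬H.Adj w (v (i + 1)) := by
          by_contra hco
          push_neg at hco
          obtain ⟨i, hi1, hi2⟩ := fin5_cover (Finset.univ.filter (fun i => H.Adj w (v i)))
            (by
              intro i
              rcases Classical.em (H.Adj w (v i)) with h | h
              · exact Or.inl (by simpa using h)
              · exact Or.inr (by simpa using hco i h))
          simp only [Finset.mem_filter] at hi1 hi2
          exact hT w (v i) (v (i + 1)) hi1.2 hi2.2 (cycAdj _ _ (Or.inl rfl))
        obtain ⟨i, hw1, hw2⟩ := hwcov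
        exact ((h2 u w (v i) (v (i + 1)) huw (cycAdj _ _ (Or.inl rfl))
          (hcv i) (hcv (i + 1)) hw1 hw2
          (fun h => hw1 (h ▸ huw).symm) (fun h => hw2 (h ▸ huw).symm)
          (hwv i) (hwv (i + 1)))).elim
    · push_neg at hn
      exact Or.inr hn
  -- adjacency rules between classes
  have hsame : ∀ (k : Fin 5) (u w : V), H.Adj u (v (k + 1)) → H.Adj w (v (k + 1)) →
      ¬H.Adj u w := fun k u w hu hw h => hT u w (v (k + 1)) h hu hw
  have hskip : ∀ (k : Fin 5) (u w : V), H.Adj u (v (k + 1)) → H.Adj w (v (k + 2 + 4)) →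
      ¬H.Adj u w := by
    intro k u w hu hw h
    rw [(by decide : ∀ k : Fin 5, k + 2 + 4 = k + 1) k] at hw
    exact hT u w (v (k + 1)) h hu hw
  have hnext : ∀ (k : Fin 5) (u w : V),
      H.Adj u (v (k + 1)) → H.Adj u (v (k + 4)) →
      H.Adj w (v (k + 2)) → H.Adj w (v k) →
      u ≠ w → H.Adj u w := by
    intro k u w hu1 hu4 hw2 hw0 hne
    by_contra hna
    have hwc1 : H.Adj w (v (k + 1 + 1)) := by
      rwa [(by decide : ∀ k : Fin 5, k + 1 + 1 = k + 2) k]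
    have hwc4 : H.Adj w (v (k + 1 + 4)) := by
      rwa [(by decide : ∀ k : Fin 5, k + 1 + 4 = k) k]
    have hu2 : ¬H.Adj u (v (k + 2)) := fun h =>
      ((by decide : ∀ k : Fin 5, ¬(k + 2 = k + 1 ∨ k + 2 = k + 4)) k)
        (hnotk k u hu1 hu4 _ h)
    have hw4 : ¬H.Adj w (v (k + 4)) := fun h =>
      ((by decide : ∀ k : Fin 5, ¬(k + 4 = k + 1 + 1 ∨ k + 4 = k + 1 + 4)) k)
        (hnotk (k + 1) w hwc1 hwc4 _ h)
    have hne_u2 : u ≠ v (k + 2) := fun h =>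
      cycNadj (k + 2) (k + 4) ((by decide : ∀ k : Fin 5, k + 4 ≠ k + 2 + 1) k)
        ((by decide : ∀ k : Fin 5, k + 2 ≠ k + 4 + 1) k) (h ▸ hu4)
    have hne_w4 : v (k + 4) ≠ w := fun h =>
      cycNadj (k + 4) (k + 2) ((by decide : ∀ k : Fin 5, k + 2 ≠ k + 4 + 1) k)
        ((by decide : ∀ k : Fin 5, k + 4 ≠ k + 2 + 1) k) (h.symm ▸ hw2)
    exact h2 u (v (k + 4)) w (v (k + 2)) hu4 hw2 hna hu2
      (fun h => hw4 h.symm)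
      (cycNadj (k + 4) (k + 2) ((by decide : ∀ k : Fin 5, k + 2 ≠ k + 4 + 1) k)
        ((by decide : ∀ k : Fin 5, k + 4 ≠ k + 2 + 1) k))
      hne hne_u2 hne_w4
      (fun h => ((by decide : ∀ k : Fin 5, k + 4 ≠ k + 2) k) (hvinj _ _ h))
  -- the classifying map
  obtain ⟨g, Hg⟩ : ∃ g : V → Fin 6, ∀ u : V,
      (g u = 5 ∧ ∀ w, ¬H.Adj u w) ∨
      (∃ k : Fin 5, g u = em5 k ∧ H.Adj u (v (k + 1)) ∧ H.Adj u (v (k + 4))) := by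
    refine ⟨fun u => if h : ∃ k : Fin 5, H.Adj u (v (k + 1)) ∧ H.Adj u (v (k + 4))
      then em5 (Classical.choose h) else 5, fun u => ?_⟩
    by_cases h : ∃ k : Fin 5, H.Adj u (v (k + 1)) ∧ H.Adj u (v (k + 4))
    · exact Or.inr ⟨Classical.choose h, by simp only [dif_pos h],
        (Classical.choose_spec h).1, (Classical.choose_spec h).2⟩
    · refine Or.inl ⟨by simp only [dif_neg h], ?_⟩
      rcases htot u with hk | hiso
      · exact absurd hk h
      · exact hiso
  have hmaster : ∀ u w : V, u ≠ w → (H.Adj u w ↔ Dnext (g u) (g w)) := by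
    intro u w hne
    rcases Hg u with ⟨hu5, huiso⟩ | ⟨k, hgu, hk1, hk4⟩
    · constructor
      · intro h; exact (huiso w h).elim
      · rintro ⟨k', l', ha, hb, _⟩; rw [hu5] at ha; exact (em5_ne5 k' ha.symm).elim
    · rcases Hg w with ⟨hw5, hwiso⟩ | ⟨l, hgw, hl1, hl4⟩
      · constructor
        · intro h; exact (hwiso u h.symm).elim
        · rintro ⟨k', l', ha, hb, _⟩; rw [hw5] at hb; exact (em5_ne5 l' hb.symm).elim
      · rw [hgu, hgw]
        constructor
        · intro hadj
          refine ⟨k, l, rfl, rfl, ?_⟩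
          rcases fin5_cases l k with h | h | h | h | h
          · rw [h] at hl1
            exact (hsame k u w hk1 hl1 hadj).elim
          · exact Or.inl h
          · rw [h] at hl4
            exact (hskip k u w hk1 hl4 hadj).elim
          · rw [h] at hl1
            refine (hskip (k + 3) w u hl1 ?_ hadj.symm).elim
            rwa [(by decide : ∀ k : Fin 5, k + 3 + 2 + 4 = k + 4) k]
          · refine Or.inr ?_
            rw [h]
            exact ((by decide : ∀ k : Fin 5, k = k + 4 + 1) k)
        · rintro ⟨k', l', ha, hb, hd⟩
          obtain rfl : k = k' := em5_inj _ _ ha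
          obtain rfl : l = l' := em5_inj _ _ hb
          rcases hd with h | h
          · rw [h] at hl1 hl4
            refine hnext k u w hk1 hk4 ?_ ?_ hne
            · rwa [(by decide : ∀ k : Fin 5, k + 1 + 1 = k + 2) k] at hl1
            · rwa [(by decide : ∀ k : Fin 5, k + 1 + 4 = k) k] at hl4
          · rw [h] at hk1 hk4
            refine (hnext l w u hl1 hl4 ?_ ?_ hne.symm).symm
            · rwa [(by decide : ∀ l : Fin 5, l + 1 + 1 = l + 2) l] at hk1
            · rwa [(by decide : ∀ l : Fin 5, l + 1 + 4 = l) l] at hk4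
  refine ⟨fun u => relabel (g u), fun u w hne => ?_⟩
  rw [← relabel_decide (g u) (g w)]
  exact not_congr (hmaster u w hne)

lemma col_case {V : Type*} (H : SimpleGraph V)
    (hT : ∀ a b c : V, H.Adj a b → H.Adj a c → H.Adj b c → False)
    (h2 : ∀ a b c d : V, H.Adj a b → H.Adj c d → ¬H.Adj a c → ¬H.Adj a d →
      ¬H.Adj b c → ¬H.Adj b d → a ≠ c → a ≠ d → b ≠ c → b ≠ d → False)
    (hc5 : ¬ ∃ v0 v1 v2 v3 v4 : V,
      H.Adj v0 v1 ∧ H.Adj v1 v2 ∧ H.Adj v2 v3 ∧ H.Adj v3 v4 ∧ H.Adj v4 v0 ∧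
      ¬H.Adj v0 v2 ∧ ¬H.Adj v0 v3 ∧ ¬H.Adj v1 v3 ∧ ¬H.Adj v1 v4 ∧ ¬H.Adj v2 v4) :
    H.Colorable 2 := by
  by_cases hE : ∃ a b : V, H.Adj a b
  · obtain ⟨a, b, hab⟩ := hE
    refine ⟨SimpleGraph.Coloring.mk
      (fun u => if H.Adj a u then 0 else if H.Adj b u then 1
        else if ∃ x, H.Adj a x ∧ H.Adj x u then 1 else 0) ?_⟩
    intro u w huw
    by_cases hau : H.Adj a u <;> by_cases haw : H.Adj a w
    · exact (hT a u w hau haw huw).elim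
    · rw [if_pos hau, if_neg haw]
      by_cases hbw : H.Adj b w
      · rw [if_pos hbw]; decide
      · rw [if_neg hbw, if_pos ⟨u, hau, huw⟩]; decide
    · rw [if_neg hau, if_pos haw]
      by_cases hbu : H.Adj b u
      · rw [if_pos hbu]; decide
      · rw [if_neg hbu, if_pos ⟨w, haw, huw.symm⟩]; decide
    · rw [if_neg hau, if_neg haw]
      by_cases hbu : H.Adj b u <;> by_cases hbw : H.Adj b w
      · exact (hT b u w hbu hbw huw).elim
      · rw [if_pos hbu, if_neg hbw]
        rw [if_neg (fun hx : ∃ x, H.Adj a x ∧ H.Adj x w => hx.elim (fun x hx' =>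
          hc5 ⟨a, x, w, u, b, hx'.1, hx'.2, huw.symm, hbu.symm, hab.symm,
            haw, hau, fun h => hT x u w h hx'.2 huw, fun h => hT a x b hx'.1 hab h,
            fun h => hbw h.symm⟩))]
        decide
      · rw [if_neg hbu, if_pos hbw]
        rw [if_neg (fun hx : ∃ x, H.Adj a x ∧ H.Adj x u => hx.elim (fun x hx' =>
          hc5 ⟨a, x, u, w, b, hx'.1, hx'.2, huw, hbw.symm, hab.symm,
            hau, haw, fun h => hT x u w hx'.2 h huw, fun h => hT a x b hx'.1 hab h,
            fun h => hbu h.symm⟩))]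
        decide
      · exact (h2 u w a b huw hab (fun h => hau h.symm) (fun h => hbu h.symm)
          (fun h => haw h.symm) (fun h => hbw h.symm)
          (fun h => haw (h ▸ huw)) (fun h => hbw (h ▸ huw))
          (fun h => hau (h ▸ huw.symm)) (fun h => hbu (h ▸ huw.symm))).elim
  · push_neg at hE
    exact ⟨SimpleGraph.Coloring.mk (fun _ => 0) (fun {x y} h => absurd h (hE x y))⟩


lemma main_structure {V : Type*} (H : SimpleGraph V)
    (hT : ∀ a b c : V, H.Adj a b → H.Adj a c → H.Adj b c → False)
    (h2 : ∀ a b c d : V, H.Adj a b → H.Adj c d → ¬H.Adj a c → ¬H.Adj a d →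
      ¬H.Adj b c → ¬H.Adj b d → a ≠ c → a ≠ d → b ≠ c → b ≠ d → False) :
    H.Colorable 2 ∨
      ∃ f : V → Fin 6, ∀ u w : V, u ≠ w →
        (¬H.Adj u w ↔ (f u = f w ∨ W5.Adj (f u) (f w))) := by
  by_cases hc5 : ∃ v0 v1 v2 v3 v4 : V,
      H.Adj v0 v1 ∧ H.Adj v1 v2 ∧ H.Adj v2 v3 ∧ H.Adj v3 v4 ∧ H.Adj v4 v0 ∧
      ¬H.Adj v0 v2 ∧ ¬H.Adj v0 v3 ∧ ¬H.Adj v1 v3 ∧ ¬H.Adj v1 v4 ∧ ¬H.Adj v2 v4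
  · exact Or.inr (c5_case H hT h2 hc5)
  · exact Or.inl (col_case H hT h2 hc5)

theorem stmt6 {V : Type*} [Fintype V] (G : SimpleGraph V)
    (hC4 : IsC4Free G) (hα : _root_.indepNum G ≤ 2) :
    Gᶜ.Colorable 2 ∨
      ∃ f : V → Fin 6, ∀ u v : V, u ≠ v →
        (G.Adj u v ↔ (f u = f v ∨ W5.Adj (f u) (f v))) := by
  have hα' : Gᶜ.cliqueNum ≤ 2 := hα
  have hT : ∀ a b c : V, Gᶜ.Adj a b → Gᶜ.Adj a c → Gᶜ.Adj b c → False := by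
    intro a b c hab hac hbc
    have h3 : Gᶜ.IsNClique 3 {a, b, c} :=
      SimpleGraph.is3Clique_triple_iff.mpr ⟨hab, hac, hbc⟩
    have hle : 3 ≤ Gᶜ.cliqueNum := by
      have h := SimpleGraph.IsClique.card_le_cliqueNum (G := Gᶜ) (tc := h3.1)
      rwa [h3.2] at h
    omega
  have toG : ∀ x y : V, ¬Gᶜ.Adj x y → x ≠ y → G.Adj x y := fun x y hn hne =>
    Classical.byContradiction fun h => hn ((G.compl_adj x y).mpr ⟨hne, h⟩)
  have h2 : ∀ a b c d : V, Gᶜ.Adj a b → Gᶜ.Adj c d → ¬Gᶜ.Adj a c → ¬Gᶜ.Adj a d →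
      ¬Gᶜ.Adj b c → ¬Gᶜ.Adj b d → a ≠ c → a ≠ d → b ≠ c → b ≠ d → False := by
    intro a b c d hab hcd nac nad nbc nbd hac had hbc hbd
    exact hC4 a c b d hab.ne hcd.ne
      (toG a c nac hac) ((toG b c nbc hbc).symm) (toG b d nbd hbd)
      ((toG a d nad had).symm)
      (((G.compl_adj a b).mp hab).2) (((G.compl_adj c d).mp hcd).2)
  rcases main_structure Gᶜ hT h2 with hcol | ⟨f, hf⟩
  · exact Or.inl hcol
  · refine Or.inr ⟨f, fun u w hne => ?_⟩
    rw [← hf u w hne]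
    constructor
    · exact fun h h' => ((G.compl_adj u w).mp h').2 h
    · exact fun h => toG u w h hne
end

section
/- Let G be a C4-free graph on n vertices with minimum degree δ, let S = {x_1,…,x_t} be an independent set in G with neighborhoods A_i = N(x_i), and let m = max over i ≠ j of |A_i ∩ A_j|. Then t·δ < n + C(t,2)·m, and consequently ω(G) ≥ (tδ − n)/C(t,2). -/
open SimpleGraph
open scoped Classical

theorem stmt9 {V : Type*} [Fintype V] [DecidableEq V] (G : SimpleGraph V) [DecidableRel G.Adj]
    (hC4 : IsC4Free G) (S : Finset V) (hS : _root_.IsIndepSet G ↑S) (ht : 2 ≤ S.card)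
    (m : ℕ)
    (hm : m = S.offDiag.sup fun p => (G.neighborFinset p.1 ∩ G.neighborFinset p.2).card) :
    S.card * G.minDegree < Fintype.card V + (S.card.choose 2) * m ∧
      (G.cliqueNum : ℝ) ≥
        ((S.card : ℝ) * (G.minDegree : ℝ) - (Fintype.card V : ℝ)) / (S.card.choose 2 : ℝ) := by
  classical
  set t := S.card with htdef
  set n := Fintype.card V
  set δ := G.minDegree
  set C := t.choose 2 with hCdef
  set D : V → ℕ := fun v => (S.filter (fun i => G.Adj i v)).card with hD
  -- Step A: ∑_{i∈S} deg i = ∑_v D v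
  have stepA : ∑ i ∈ S, G.degree i = ∑ v : V, D v := by
    simp only [hD, SimpleGraph.degree, SimpleGraph.neighborFinset,
      Finset.card_eq_sum_ones, Finset.sum_filter]
    rw [Finset.sum_comm]
    simp [SimpleGraph.neighborSet, Set.toFinset_setOf]
    exact Finset.sum_congr rfl fun i _ => by congr 1; ext; exact Finset.mem_map.trans ⟨fun ⟨a, _, h⟩ => by subst h; exact Finset.mem_filter.mpr ⟨Finset.mem_univ _, a.2⟩, fun h => ⟨⟨_, by simpa using h⟩, Finset.mem_univ _, rfl⟩⟩
  -- Step B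
  have stepB : ∑ p ∈ S.offDiag, (G.neighborFinset p.1 ∩ G.neighborFinset p.2).card
      = ∑ v : V, (D v * D v - D v) := by
    have h1 : ∀ p : V × V, (G.neighborFinset p.1 ∩ G.neighborFinset p.2).card
        = ∑ v : V, (if G.Adj p.1 v ∧ G.Adj p.2 v then 1 else 0) := by
      intro p
      rw [← Finset.card_filter]
      congr 1
      ext v
      simp [SimpleGraph.mem_neighborFinset]
    simp only [h1]
    rw [Finset.sum_comm]
    refine Finset.sum_congr rfl fun v _ => ?_
    have h2 : (S.filter (fun i => G.Adj i v)).offDiag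
        = S.offDiag.filter (fun p => G.Adj p.1 v ∧ G.Adj p.2 v) := by
      ext p
      simp only [Finset.mem_offDiag, Finset.mem_filter]
      tauto
    rw [← Finset.card_filter, ← h2, Finset.offDiag_card]
  have hDS : ∀ v ∈ S, D v = 0 := by
    intro v hv
    simp only [hD, Finset.card_eq_zero, Finset.filter_eq_empty_iff]
    intro i hi hadj
    rcases eq_or_ne i v with rfl | hne
    · exact G.irrefl hadj
    · exact hS hi hv hne hadj
  have hpt : ∀ v : V, 2 * D v ≤ (if v ∈ S then 0 else 2) + (D v * D v - D v) := by
    intro v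
    by_cases hv : v ∈ S
    · simp [hDS v hv, hv]
    · simp only [hv, if_false]
      rcases Nat.lt_or_ge (D v) 2 with h | h
      · interval_cases h : D v <;> simp
      · obtain ⟨k, hk⟩ : ∃ k, D v = k + 2 := ⟨D v - 2, by omega⟩
        rw [hk]
        have : (k + 2) * (k + 2) = k * k + 4 * k + 4 := by ring
        omega
  have hsup : ∀ p ∈ S.offDiag,
      (G.neighborFinset p.1 ∩ G.neighborFinset p.2).card ≤ m := by
    intro p hp
    rw [hm]
    exact Finset.le_sup (f := fun p : V × V =>
      (G.neighborFinset p.1 ∩ G.neighborFinset p.2).card) hp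
  have hBbound : ∑ p ∈ S.offDiag, (G.neighborFinset p.1 ∩ G.neighborFinset p.2).card
      ≤ (t * t - t) * m := by
    calc _ ≤ ∑ _p ∈ S.offDiag, m := Finset.sum_le_sum hsup
    _ = S.offDiag.card * m := by rw [Finset.sum_const, smul_eq_mul]
    _ = (t * t - t) * m := by rw [Finset.offDiag_card]
  have hC2 : 2 * C = t * t - t := by
    obtain ⟨k, hk⟩ : ∃ k, t = k + 2 := ⟨t - 2, by omega⟩
    rw [hCdef, hk, Nat.choose_two_right]
    have h1 : k + 2 - 1 = k + 1 := rfl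
    rw [h1]
    have he : 2 ∣ (k + 2) * (k + 1) := by
      obtain ⟨j, hj⟩ := Nat.even_mul_succ_self k
      have hexp : (k + 2) * (k + 1) = k * (k + 1) + 2 * (k + 1) := by ring
      omega
    rw [Nat.mul_div_cancel' he]
    have h2 : (k + 2) * (k + 2) = (k + 2) * (k + 1) + (k + 2) := by ring
    omega
  have htn : t ≤ n := (Finset.card_le_univ S).trans_eq Finset.card_univ
  have hdeg : t * δ ≤ ∑ i ∈ S, G.degree i := by
    calc t * δ = ∑ _i ∈ S, δ := by rw [Finset.sum_const, smul_eq_mul]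
    _ ≤ _ := Finset.sum_le_sum fun i _ => by
        have : Nonempty V := ⟨i⟩
        exact G.minDegree_le_degree i
  have hmain : 2 * (t * δ) ≤ 2 * (n - t) + 2 * (C * m) := by
    have e1 : (∑ v : V, if v ∈ S then 0 else 2) = 2 * (n - t) := by
      have hcompl : Finset.univ.filter (fun v => ¬ v ∈ S) = Sᶜ := by
        ext v; simp
      rw [Finset.sum_ite, hcompl, Finset.sum_const, Finset.sum_const, Finset.card_compl]
      simp [mul_comm]; rfl
    have e2 : ∑ v : V, (D v * D v - D v) ≤ 2 * (C * m) := by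
      rw [← mul_assoc, hC2, ← stepB]
      exact hBbound
    calc 2 * (t * δ) ≤ 2 * ∑ v : V, D v := by
          rw [← stepA]; exact Nat.mul_le_mul_left 2 hdeg
    _ = ∑ v : V, 2 * D v := by rw [Finset.mul_sum]
    _ ≤ ∑ v : V, ((if v ∈ S then 0 else 2) + (D v * D v - D v)) :=
          Finset.sum_le_sum fun v _ => hpt v
    _ = (∑ v : V, if v ∈ S then 0 else 2) + ∑ v : V, (D v * D v - D v) :=
          Finset.sum_add_distrib
    _ ≤ 2 * (n - t) + 2 * (C * m) := by rw [e1]; exact Nat.add_le_add_left e2 _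
  have part1 : t * δ < n + C * m := by omega
  refine ⟨part1, ?_⟩
  have hmω : m ≤ G.cliqueNum := by
    have hne : S.offDiag.Nonempty := by
      obtain ⟨a, ha, b, hb, hab⟩ := Finset.one_lt_card.mp ht
      exact ⟨(a, b), Finset.mem_offDiag.mpr ⟨ha, hb, hab⟩⟩
    obtain ⟨p, hp, hpe⟩ := Finset.exists_mem_eq_sup S.offDiag hne
      (fun p : V × V => (G.neighborFinset p.1 ∩ G.neighborFinset p.2).card)
    obtain ⟨h1, h2, h12⟩ := Finset.mem_offDiag.mp hp
    have hclique : G.IsClique ↑(G.neighborFinset p.1 ∩ G.neighborFinset p.2) := by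
      intro a ha b hb hab
      simp only [Finset.coe_inter, Set.mem_inter_iff, Finset.mem_coe,
        SimpleGraph.mem_neighborFinset] at ha hb
      by_contra hnadj
      exact hC4 p.1 a p.2 b h12 hab ha.1 ha.2.symm hb.2 hb.1.symm
        (hS h1 h2 h12) hnadj
    have hle := SimpleGraph.IsClique.card_le_cliqueNum (tc := hclique)
    rw [hm, hpe]
    exact hle
  have hCpos : 0 < C := Nat.choose_pos ht
  rw [ge_iff_le, div_le_iff₀ (by exact_mod_cast hCpos)]
  have hr : (t * δ : ℝ) < n + C * G.cliqueNum := by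
    have : t * δ < n + C * G.cliqueNum :=
      lt_of_lt_of_le part1 (Nat.add_le_add_left (Nat.mul_le_mul_left _ hmω) _)
    exact_mod_cast this
  push_cast at hr ⊢
  linarith
end

section
/- If G is a C4-free graph on n vertices with independence number α, then ω(G) ≥ n / C(α+1, 2). -/
open SimpleGraph
open scoped Classical

theorem key {V : Type*} [Fintype V] (G : SimpleGraph V)
    (hC4 : ∀ a b c d : V, a ≠ c → b ≠ d → G.Adj a b → G.Adj b c → G.Adj c d → G.Adj d a →
      ¬G.Adj a c → ¬G.Adj b d → False) :
    Fintype.card V ≤ G.cliqueNum * (Gᶜ.cliqueNum + 1).choose 2 := by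
  classical
  letI : LinearOrder V := LinearOrder.lift' (Fintype.equivFin V) (Fintype.equivFin V).injective
  obtain ⟨S, hS⟩ := Gᶜ.exists_isNClique_cliqueNum
  have hSclique : Gᶜ.IsClique ↑S := hS.isClique
  have hScard : S.card = Gᶜ.cliqueNum := hS.card_eq
  -- S is independent in G
  have hSind : ∀ x ∈ S, ∀ y ∈ S, x ≠ y → ¬G.Adj x y := by
    intro x hx y hy hxy
    have := hSclique hx hy hxy
    rw [compl_adj] at this
    exact this.2
  -- bound on independent sets
  have hbound : ∀ (W : Finset V), (∀ x ∈ W, ∀ y ∈ W, x ≠ y → ¬G.Adj x y) →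
      W.card ≤ Gᶜ.cliqueNum := by
    intro W hW
    have : Gᶜ.IsClique ↑W := by
      intro x hx y hy hxy
      rw [compl_adj]
      exact ⟨hxy, hW x hx y hy hxy⟩
    exact IsClique.card_le_cliqueNum (tc := this)
  set T : V → Finset V := fun v => if v ∈ S then {v} else S.filter (G.Adj v) with hTdef
  have hTne : ∀ v, (T v).Nonempty := by
    intro v
    by_cases hv : v ∈ S
    · simp [hTdef, hv]
    · rw [hTdef]
      simp only [hv, if_neg, if_false]
      by_contra hemp
      rw [Finset.not_nonempty_iff_eq_empty, Finset.filter_eq_empty_iff] at hemp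
      have : (insert v S).card ≤ Gᶜ.cliqueNum := by
        apply hbound
        intro x hx y hy hxy h
        rcases Finset.mem_insert.1 hx with hx' | hx' <;>
          rcases Finset.mem_insert.1 hy with hy' | hy'
        · exact hxy (hx'.trans hy'.symm)
        · exact hemp hy' (hx' ▸ h)
        · exact hemp hx' ((hy' ▸ h).symm)
        · exact hSind x hx' y hy' hxy h
      rw [Finset.card_insert_of_notMem hv, hScard] at this
      omega
  have hTsub : ∀ v, T v ⊆ S := by
    intro v
    by_cases hv : v ∈ S
    · simp [hTdef, hv, Finset.singleton_subset_iff]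
    · simp [hTdef, hv, Finset.filter_subset]
  have hTadj : ∀ v, v ∉ S → ∀ x ∈ T v, G.Adj v x := by
    intro v hv x hx
    rw [hTdef] at hx
    simp only [hv, if_false] at hx
    exact (Finset.mem_filter.1 hx).2
  set f : V → Sym2 V := fun v => s((T v).min' (hTne v), (T v).max' (hTne v)) with hfdef
  have hmaps : ∀ v ∈ Finset.univ, f v ∈ S.sym2 := by
    intro v _
    rw [hfdef]
    exact Finset.mk_mem_sym2_iff.2 ⟨hTsub v (Finset.min'_mem _ _), hTsub v (Finset.max'_mem _ _)⟩
  rw [← Finset.card_univ, Finset.card_eq_sum_card_fiberwise hmaps]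
  have hfiber : ∀ z ∈ S.sym2, (Finset.univ.filter (fun v => f v = z)).card ≤ G.cliqueNum := by
    intro z hz
    apply IsClique.card_le_cliqueNum (tc := ?_)
    induction z using Sym2.inductionOn with
    | hf x y =>
      intro u hu v hv huv
      simp only [Finset.coe_filter, Set.mem_setOf_eq, Finset.mem_univ, true_and] at hu hv
      -- u, v in fiber of s(x,y)
      by_cases hxy : x = y
      · -- T u = {x} and T v = {x}
        subst hxy
        have hTeq : ∀ w, f w = s(x, x) → T w = {x} := by
          intro w hw
          have h1 : (T w).min' (hTne w) = x ∧ (T w).max' (hTne w) = x := by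
            rw [hfdef] at hw
            simpa [Sym2.eq_iff] using hw
          apply Finset.eq_singleton_iff_unique_mem.2
          constructor
          · rw [← h1.1]; exact Finset.min'_mem _ _
          · intro t ht
            have := Finset.min'_le _ t ht
            have := Finset.le_max' _ t ht
            rw [h1.2] at this
            have h3 : x ≤ t := h1.1 ▸ Finset.min'_le _ t ht
            exact le_antisymm this h3
        have hTu := hTeq u hu
        have hTv := hTeq v hv
        have hxS : x ∈ S := (Finset.mk_mem_sym2_iff.1 hz).1
        have hsing : ∀ w, w ∈ S → T w = {x} → w = x := by
          intro w hw hTw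
          rw [hTdef] at hTw
          simp only [hw, if_true] at hTw
          exact Finset.singleton_inj.1 hTw
        have hadjx : ∀ w, w ∉ S → T w = {x} → G.Adj w x := by
          intro w hw hTw
          exact hTadj w hw x (hTw ▸ Finset.mem_singleton_self x)
        by_contra hne
        rcases eq_or_ne u x with rfl | hux
        · have hvS : v ∉ S := fun h => huv (hsing v h hTv).symm
          exact hne (hadjx v hvS hTv).symm
        rcases eq_or_ne v x with rfl | hvx
        · have huS : u ∉ S := fun h => huv (hsing u h hTu)
          exact hne (hadjx u huS hTu)
        have huS : u ∉ S := fun h => hux (hsing u h hTu)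
        have hvS : v ∉ S := fun h => hvx (hsing v h hTv)
        have honly : ∀ w, w ∉ S → T w = {x} → ∀ s ∈ S, G.Adj w s → s = x := by
          intro w hw hTw s hs hadj
          have : s ∈ T w := by rw [hTdef]; simp [hw, hs, hadj]
          rw [hTw] at this
          exact Finset.mem_singleton.1 this
        set W : Finset V := insert u (insert v (S.erase x)) with hWdef
        have hWcard : W.card = Gᶜ.cliqueNum + 1 := by
          rw [hWdef, Finset.card_insert_of_notMem, Finset.card_insert_of_notMem
            (fun h => hvS (Finset.mem_of_mem_erase h)), Finset.card_erase_of_mem hxS, hScard]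
          · have h1 : 1 ≤ Gᶜ.cliqueNum := hScard ▸ Finset.card_pos.2 ⟨x, hxS⟩
            omega
          · intro h
            rcases Finset.mem_insert.1 h with h | h
            · exact huv h
            · exact huS (Finset.mem_of_mem_erase h)
        have hWind : ∀ z ∈ W, ∀ w ∈ W, z ≠ w → ¬G.Adj z w := by
          have hkey : ∀ z, (z = u ∨ z = v) → ∀ s ∈ S.erase x, ¬G.Adj z s := by
            intro z hz' s hs hadj
            have hsx : s ≠ x := Finset.ne_of_mem_erase hs
            have hsS : s ∈ S := Finset.mem_of_mem_erase hs
            rcases hz' with rfl | rfl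
            · exact hsx (honly z huS hTu s hsS hadj)
            · exact hsx (honly z hvS hTv s hsS hadj)
          intro z hz' w hw' hzw hadj
          rw [hWdef] at hz' hw'
          simp only [Finset.mem_insert] at hz' hw'
          rcases hz' with h1 | h1 | h1 <;> rcases hw' with h2 | h2 | h2
          · exact hzw (h1.trans h2.symm)
          · subst h1; subst h2; exact hne hadj
          · exact hkey z (Or.inl h1) w h2 hadj
          · subst h1; subst h2; exact hne hadj.symm
          · exact hzw (h1.trans h2.symm)
          · exact hkey z (Or.inr h1) w h2 hadj
          · exact hkey w (Or.inl h2) z h1 hadj.symm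
          · exact hkey w (Or.inr h2) z h1 hadj.symm
          · exact hSind z (Finset.mem_of_mem_erase h1) w (Finset.mem_of_mem_erase h2) hzw hadj
        have := hbound W hWind
        rw [hWcard] at this
        omega
      · -- x ≠ y : common neighborhood
        have hxS : x ∈ S := (Finset.mk_mem_sym2_iff.1 hz).1
        have hyS : y ∈ S := (Finset.mk_mem_sym2_iff.1 hz).2
        have hmem : ∀ w, f w = s(x, y) → x ∈ T w ∧ y ∈ T w := by
          intro w hw
          rw [hfdef] at hw
          rw [Sym2.eq_iff] at hw
          rcases hw with ⟨h1, h2⟩ | ⟨h1, h2⟩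
          · exact ⟨by rw [← h1]; exact Finset.min'_mem _ _,
              by rw [← h2]; exact Finset.max'_mem _ _⟩
          · exact ⟨by rw [← h2]; exact Finset.max'_mem _ _,
              by rw [← h1]; exact Finset.min'_mem _ _⟩
        have hnot : ∀ w, f w = s(x, y) → w ∉ S := by
          intro w hw hwS
          have := hmem w hw
          rw [hTdef] at this
          simp only [hwS, if_true, Finset.mem_singleton] at this
          exact hxy (this.1.trans this.2.symm)
        have hu' := hmem u hu
        have hv' := hmem v hv
        have hadj_u_x : G.Adj u x := hTadj u (hnot u hu) x hu'.1
        have hadj_u_y : G.Adj u y := hTadj u (hnot u hu) y hu'.2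
        have hadj_v_x : G.Adj v x := hTadj v (hnot v hv) x hv'.1
        have hadj_v_y : G.Adj v y := hTadj v (hnot v hv) y hv'.2
        by_contra hne
        exact hC4 u x v y huv hxy hadj_u_x hadj_v_x.symm hadj_v_y (hadj_u_y).symm hne
          (hSind x hxS y hyS hxy)
  calc ∑ z ∈ S.sym2, (Finset.univ.filter (fun v => f v = z)).card
      ≤ ∑ _z ∈ S.sym2, G.cliqueNum := Finset.sum_le_sum hfiber
    _ = S.sym2.card * G.cliqueNum := by rw [Finset.sum_const, smul_eq_mul]
    _ = G.cliqueNum * (Gᶜ.cliqueNum + 1).choose 2 := by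
        rw [Finset.card_sym2, hScard, mul_comm]

theorem stmt10 {V : Type*} [Fintype V] (G : SimpleGraph V) (hC4 : IsC4Free G) :
    (G.cliqueNum : ℝ) ≥ (Fintype.card V : ℝ) / ((_root_.indepNum G + 1).choose 2 : ℝ) := by
  have h := key G hC4
  rw [ge_iff_le]
  unfold _root_.indepNum
  rcases Nat.eq_zero_or_pos ((Gᶜ.cliqueNum + 1).choose 2) with h0 | h0
  · rw [h0]
    simp only [Nat.cast_zero, div_zero]
    positivity
  · rw [div_le_iff₀ (by exact_mod_cast h0)]
    exact_mod_cast h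
end

section
/- If G is a C4-free graph on n vertices with minimum degree δ(G) ≥ n/2, then ω(G) ≥ n/12. -/
open SimpleGraph
open scoped Classical

lemma aux_common {V : Type*} [Fintype V] (G : SimpleGraph V) [DecidableRel G.Adj]
    (hC4 : IsC4Free G) {u v : V} (hne : u ≠ v) (huv : ¬ G.Adj u v) :
    G.IsClique ((G.neighborFinset u ∩ G.neighborFinset v : Finset V) : Set V) := by
  intro x hx y hy hxy
  simp only [Finset.coe_inter, Set.mem_inter_iff, Finset.mem_coe, mem_neighborFinset] at hx hy
  by_contra hxy2
  exact hC4 u x v y hne hxy hx.1 hx.2.symm hy.2 hy.1.symm huv hxy2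

lemma aux_card_le {V : Type*} [Fintype V] (G : SimpleGraph V) (s : Finset V)
    (hs : G.IsClique (s : Set V)) : (s.card : ℝ) ≤ (G.cliqueNum : ℝ) := by
  exact_mod_cast @SimpleGraph.IsClique.card_le_cliqueNum _ G _ s hs

lemma aux_ie {V : Type*} [DecidableEq V] (A B C : Finset V) :
    A.card + B.card + C.card ≤ (A ∪ B ∪ C).card + ((A ∩ B).card + (A ∩ C).card + (B ∩ C).card) := by
  have h1 := Finset.card_union_add_card_inter A B
  have h2 := Finset.card_union_add_card_inter (A ∪ B) C
  have h3 : (A ∪ B) ∩ C = (A ∩ C) ∪ (B ∩ C) := Finset.union_inter_distrib_right A B C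
  have h4 := Finset.card_union_le (A ∩ C) (B ∩ C)
  rw [h3] at h2
  omega

lemma aux_deg {V : Type*} [Fintype V] (G : SimpleGraph V) [DecidableRel G.Adj] [Nonempty V]
    (hδ : (Fintype.card V : ℝ) / 2 ≤ (G.minDegree : ℝ)) (v : V) :
    (Fintype.card V : ℝ) / 2 ≤ ((G.neighborFinset v).card : ℝ) := by
  have := G.minDegree_le_degree v
  rw [G.card_neighborFinset_eq_degree v]
  exact hδ.trans (by exact_mod_cast this)

theorem stmt11 {V : Type*} [Fintype V] (G : SimpleGraph V) [DecidableRel G.Adj]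
    (hC4 : IsC4Free G) (hδ : (Fintype.card V : ℝ) / 2 ≤ (G.minDegree : ℝ)) :
    (G.cliqueNum : ℝ) ≥ (Fintype.card V : ℝ) / 12 := by
  rcases isEmpty_or_nonempty V with hV | hV
  · simp [Fintype.card_eq_zero]
  set n := Fintype.card V with hn
  by_cases hcomp : ∀ x y : V, x ≠ y → G.Adj x y
  · -- complete graph
    have hcl : G.IsClique ((Finset.univ : Finset V) : Set V) := fun x _ y _ hxy => hcomp x y hxy
    have := aux_card_le G Finset.univ hcl
    rw [Finset.card_univ] at this
    have hn0 : (0:ℝ) ≤ (n:ℝ) := Nat.cast_nonneg n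
    linarith
  push_neg at hcomp
  obtain ⟨u, v, hne, huv⟩ := hcomp
  by_cases htri : ∃ x y z : V, x ≠ y ∧ x ≠ z ∧ y ≠ z ∧ ¬G.Adj x y ∧ ¬G.Adj x z ∧ ¬G.Adj y z
  · -- independent triple
    obtain ⟨x, y, z, hxy, hxz, hyz, axy, axz, ayz⟩ := htri
    set A := G.neighborFinset x
    set B := G.neighborFinset y
    set C := G.neighborFinset z
    have hun : (A ∪ B ∪ C) ⊆ Finset.univ \ {x, y, z} := by
      intro w hw
      simp only [Finset.mem_union] at hw
      simp only [Finset.mem_sdiff, Finset.mem_univ, true_and, Finset.mem_insert,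
        Finset.mem_singleton]
      push_neg
      have hmem : ∀ p : V, w ∈ G.neighborFinset p → w ≠ p := by
        intro p hp
        rw [mem_neighborFinset] at hp
        exact hp.ne'
      have hmem2 : ∀ p q : V, w ∈ G.neighborFinset p → ¬G.Adj p q → w ≠ q := by
        intro p q hp hpq h
        rw [mem_neighborFinset] at hp
        exact hpq (h ▸ hp)
      rcases hw with (h | h) | h
      · exact ⟨hmem x h, hmem2 x y h axy, hmem2 x z h axz⟩
      · exact ⟨hmem2 y x h (fun h' => axy h'.symm), hmem y h, hmem2 y z h ayz⟩
      · exact ⟨hmem2 z x h (fun h' => axz h'.symm), hmem2 z y h (fun h' => ayz h'.symm), hmem z h⟩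
    have hcard3 : ({x, y, z} : Finset V).card = 3 := by
      rw [Finset.card_insert_of_notMem (by simp [hxy, hxz]),
        Finset.card_insert_of_notMem (by simp [hyz]), Finset.card_singleton]
    have hunc : ((A ∪ B ∪ C).card : ℝ) ≤ (n : ℝ) - 3 := by
      have := Finset.card_le_card hun
      have h2 : (Finset.univ \ {x, y, z} : Finset V).card = n - 3 := by
        rw [Finset.card_sdiff_of_subset (Finset.subset_univ _), Finset.card_univ, hcard3]
      rw [h2] at this
      have h3 : 3 ≤ n := by
        have := Finset.card_le_card (Finset.subset_univ ({x, y, z} : Finset V))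
        rw [hcard3, Finset.card_univ] at this
        exact this
      have : ((A ∪ B ∪ C).card : ℝ) ≤ ((n - 3 : ℕ) : ℝ) := Nat.cast_le.mpr this
      rwa [Nat.cast_sub h3] at this
    have hie := aux_ie A B C
    have hie' : ((A.card : ℝ) + B.card + C.card) ≤ ((A ∪ B ∪ C).card : ℝ)
        + ((A ∩ B).card + (A ∩ C).card + (B ∩ C).card) := by exact_mod_cast hie
    have c1 := aux_card_le G (A ∩ B) (aux_common G hC4 hxy axy)
    have c2 := aux_card_le G (A ∩ C) (aux_common G hC4 hxz axz)
    have c3 := aux_card_le G (B ∩ C) (aux_common G hC4 hyz ayz)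
    have d1 := aux_deg G hδ x
    have d2 := aux_deg G hδ y
    have d3 := aux_deg G hδ z
    linarith
  · -- no independent triple
    push_neg at htri
    set A := insert u (G.neighborFinset u \ G.neighborFinset v) with hA
    set B := insert v (G.neighborFinset v \ G.neighborFinset u) with hB
    set C := G.neighborFinset u ∩ G.neighborFinset v with hC
    have hcov : (Finset.univ : Finset V) ⊆ A ∪ B ∪ C := by
      intro w _
      simp only [Finset.mem_union, hA, hB, hC, Finset.mem_insert, Finset.mem_sdiff,
        Finset.mem_inter, mem_neighborFinset]
      by_cases hwu : w = u
      · tauto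
      by_cases hwv : w = v
      · tauto
      by_cases h1 : G.Adj u w
      · by_cases h2 : G.Adj v w
        · tauto
        · tauto
      · have h2 : G.Adj v w := htri u v w hne (Ne.symm hwu) (Ne.symm hwv) huv h1
        tauto
    have hclA : G.IsClique (A : Set V) := by
      intro a ha b hb hab
      simp only [hA, Finset.coe_insert, Set.mem_insert_iff, Finset.coe_sdiff,
        Set.mem_diff, Finset.mem_coe, mem_neighborFinset] at ha hb
      rcases ha with rfl | ⟨hau, hav⟩
      · rcases hb with rfl | ⟨hbu, hbv⟩
        · exact absurd rfl hab
        · exact hbu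
      · rcases hb with rfl | ⟨hbu, hbv⟩
        · exact hau.symm
        · by_contra hcon
          have hav' : a ≠ v := fun h => huv (h ▸ hau)
          have hbv' : b ≠ v := fun h => huv (h ▸ hbu)
          exact hbv (htri a b v hab hav' hbv' hcon (fun h => hav h.symm)).symm
    have hclB : G.IsClique (B : Set V) := by
      intro a ha b hb hab
      simp only [hB, Finset.coe_insert, Set.mem_insert_iff, Finset.coe_sdiff,
        Set.mem_diff, Finset.mem_coe, mem_neighborFinset] at ha hb
      rcases ha with rfl | ⟨hav, hau⟩
      · rcases hb with rfl | ⟨hbv, hbu⟩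
        · exact absurd rfl hab
        · exact hbv
      · rcases hb with rfl | ⟨hbv, hbu⟩
        · exact hav.symm
        · by_contra hcon
          have hau' : a ≠ u := fun h => huv (h ▸ hav).symm
          have hbu' : b ≠ u := fun h => huv (h ▸ hbv).symm
          exact hbu (htri a b u hab hau' hbu' hcon (fun h => hau h.symm)).symm
    have hclC : G.IsClique (C : Set V) := aux_common G hC4 hne huv
    have cA := aux_card_le G A hclA
    have cB := aux_card_le G B hclB
    have cC := aux_card_le G C hclC
    have hcards : (n : ℝ) ≤ (A.card : ℝ) + B.card + C.card := by
      have h1 := Finset.card_le_card hcov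
      have h2 := Finset.card_union_le (A ∪ B) C
      have h3 := Finset.card_union_le A B
      rw [Finset.card_univ] at h1
      have : n ≤ A.card + B.card + C.card := by omega
      exact_mod_cast this
    linarith
end

section
/- If G is a C4-free graph on n vertices with n/2 ≤ δ(G) ≤ 11n/15, then ω(G) ≥ n/6. -/
open SimpleGraph
open scoped Classical

/-- In an induced-C4-free graph, the common neighborhood of two distinct
nonadjacent vertices is a clique, hence its size is at most the clique number. -/
lemma common_nbhd_card_le {V : Type*} [Fintype V] (G : SimpleGraph V) [DecidableRel G.Adj]
    (hC4 : IsC4Free G) {x y : V} (hxy : x ≠ y) (hn : ¬ G.Adj x y) :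
    (G.neighborFinset x ∩ G.neighborFinset y).card ≤ G.cliqueNum := by
  apply IsClique.card_le_cliqueNum (tc := ?_)
  intro p hp q hq hpq
  simp only [Finset.coe_inter, Set.mem_inter_iff, Finset.mem_coe,
    SimpleGraph.mem_neighborFinset] at hp hq
  by_contra hnpq
  exact hC4 x p y q hxy hpq hp.1 hp.2.symm hq.2 hq.1.symm hn hnpq

theorem stmt12 {V : Type*} [Fintype V] (G : SimpleGraph V) [DecidableRel G.Adj]
    (hC4 : IsC4Free G) (hδ1 : (Fintype.card V : ℝ) / 2 ≤ (G.minDegree : ℝ))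
    (hδ2 : (G.minDegree : ℝ) ≤ 11 * (Fintype.card V : ℝ) / 15) :
    (G.cliqueNum : ℝ) ≥ (Fintype.card V : ℝ) / 6 := by
  set n := Fintype.card V with hn
  set δ := G.minDegree with hδdef
  set c := G.cliqueNum with hcdef
  by_contra hcon
  push_neg at hcon
  -- n > 0
  have hn0 : 0 < n := by
    rcases Nat.eq_zero_or_pos n with h | h
    · rw [h] at hcon
      simp at hcon
      have h0 : (0:ℝ) ≤ (c:ℝ) := Nat.cast_nonneg c
      linarith
    · exact h
  have hne : Nonempty V := Fintype.card_pos_iff.mp hn0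
  -- δ ≥ 1
  have hδpos : 1 ≤ δ := by
    by_contra h
    push_neg at h
    have hδ0 : δ = 0 := by omega
    rw [hδ0] at hδ1
    simp at hδ1
    have : (n : ℝ) ≤ 0 := by linarith
    exact absurd (Nat.cast_pos.mpr hn0) this.not_gt
  -- there is an edge, so c ≥ 2
  have hc2 : 2 ≤ c := by
    obtain ⟨x⟩ := hne
    have hdx : 1 ≤ G.degree x := le_trans hδpos (G.minDegree_le_degree x)
    rw [← SimpleGraph.card_neighborFinset_eq_degree] at hdx
    obtain ⟨y, hy⟩ := Finset.card_pos.mp hdx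
    rw [SimpleGraph.mem_neighborFinset] at hy
    have hclique : G.IsClique (({x, y} : Finset V) : Set V) := by
      rw [Finset.coe_insert, Finset.coe_singleton]
      exact SimpleGraph.isClique_pair.mpr fun _ => hy
    have := IsClique.card_le_cliqueNum (tc := hclique)
    rwa [Finset.card_pair hy.ne] at this
  by_cases hbig : 13 ≤ n
  · -- main case
    have hn13 : (13 : ℝ) ≤ (n : ℝ) := by exact_mod_cast hbig
    obtain ⟨v, hv⟩ := G.exists_minimal_degree_vertex
    set M : Finset V := Finset.univ \ insert v (G.neighborFinset v) with hMdef
    have hvN : v ∉ G.neighborFinset v := by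
      simp [SimpleGraph.mem_neighborFinset]
    have hMcard : M.card + (δ + 1) = n := by
      have h1 : (insert v (G.neighborFinset v)).card = δ + 1 := by
        rw [Finset.card_insert_of_notMem hvN, SimpleGraph.card_neighborFinset_eq_degree, ← hv]
      have h2 := Finset.card_sdiff_add_card_eq_card
        (Finset.subset_univ (insert v (G.neighborFinset v)))
      rw [h1, Finset.card_univ] at h2
      exact h2
    have hMmem : ∀ x, x ∈ M ↔ x ≠ v ∧ ¬ G.Adj v x := by
      intro x
      simp only [hMdef, Finset.mem_sdiff, Finset.mem_univ, Finset.mem_insert,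
        SimpleGraph.mem_neighborFinset, true_and, not_or]
    by_cases hMc : ∀ u ∈ M, ∀ w ∈ M, u ≠ w → G.Adj u w
    · -- M is a clique
      have hMclique : G.IsClique (M : Set V) := by
        intro a ha b hb hab
        exact hMc a ha b hb hab
      have hcM : M.card ≤ c := IsClique.card_le_cliqueNum (tc := hMclique)
      have h1 : (M.card : ℝ) + (δ : ℝ) + 1 = n := by exact_mod_cast hMcard
      have h2 : (M.card : ℝ) ≤ c := by exact_mod_cast hcM
      linarith
    · push_neg at hMc
      obtain ⟨u, hu, w, hw, huw, hnadj⟩ := hMc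
      have huv := (hMmem u).mp hu
      have hwv := (hMmem w).mp hw
      -- key counting fact for a non-neighbor of v
      have key : ∀ x, x ≠ v → ¬ G.Adj v x →
          (Finset.univ \ (insert v (insert x (G.neighborFinset v ∪ G.neighborFinset x)))).card
            + 2 + 2 * δ ≤ n + c := by
        intro x hxv hvx
        set S := G.neighborFinset v ∪ G.neighborFinset x with hS
        have hxS : x ∉ S := by
          simp [hS, SimpleGraph.mem_neighborFinset]
          exact hvx
        have hvS : v ∉ insert x S := by
          simp [hS, SimpleGraph.mem_neighborFinset]
          exact ⟨fun h => hxv h.symm, fun h => hvx (h.symm)⟩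
        have hcard : (insert v (insert x S)).card = S.card + 2 := by
          rw [Finset.card_insert_of_notMem hvS, Finset.card_insert_of_notMem hxS]
        have hsd : (Finset.univ \ (insert v (insert x S))).card + (S.card + 2) = n := by
          have h2 := Finset.card_sdiff_add_card_eq_card
            (Finset.subset_univ (insert v (insert x S)))
          rw [hcard, Finset.card_univ] at h2
          exact h2
        have hui : S.card + (G.neighborFinset v ∩ G.neighborFinset x).card
            = G.degree v + G.degree x := by
          rw [hS, Finset.card_union_add_card_inter,
            SimpleGraph.card_neighborFinset_eq_degree,
            SimpleGraph.card_neighborFinset_eq_degree]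
        have hic : (G.neighborFinset v ∩ G.neighborFinset x).card ≤ c :=
          common_nbhd_card_le G hC4 (fun h => hxv h.symm) hvx
        have hdv : G.degree v = δ := hv.symm
        have hdx : δ ≤ G.degree x := G.minDegree_le_degree x
        omega
      set Tu := Finset.univ \ (insert v (insert u (G.neighborFinset v ∪ G.neighborFinset u)))
        with hTu
      set Tw := Finset.univ \ (insert v (insert w (G.neighborFinset v ∪ G.neighborFinset w)))
        with hTw
      have hTuB : Tu.card + 2 + 2 * δ ≤ n + c := key u huv.1 huv.2
      have hTwB : Tw.card + 2 + 2 * δ ≤ n + c := key w hwv.1 hwv.2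
      set P := (M.erase u).erase w with hP
      have hPcard : P.card + 2 = M.card := by
        have hw' : w ∈ M.erase u := Finset.mem_erase.mpr ⟨fun h => huw h.symm, hw⟩
        rw [hP, Finset.card_erase_of_mem hw', Finset.card_erase_of_mem hu]
        have h1 : 1 ≤ M.card := Finset.card_pos.mpr ⟨u, hu⟩
        have h2 : 1 ≤ (M.erase u).card := Finset.card_pos.mpr ⟨w, hw'⟩
        rw [Finset.card_erase_of_mem hu] at h2
        omega
      -- every vertex of P not adjacent to x∈{u,w} lies in Tx
      have hcover : ∀ (x : V) (T : Finset V), x ∉ P →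
          T = Finset.univ \ (insert v (insert x (G.neighborFinset v ∪ G.neighborFinset x))) →
          P.card ≤ (P ∩ G.neighborFinset x).card + T.card := by
        intro x T hxP hT
        have hsub : P ⊆ (P ∩ G.neighborFinset x) ∪ T := by
          intro p hp
          by_cases hpx : p ∈ G.neighborFinset x
          · exact Finset.mem_union_left _ (Finset.mem_inter.mpr ⟨hp, hpx⟩)
          · apply Finset.mem_union_right
            have hpM : p ∈ M := Finset.mem_of_mem_erase (Finset.mem_of_mem_erase hp)
            have hpv := (hMmem p).mp hpM
            rw [hT]
            have hpx' : ¬ G.Adj x p := by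
              rw [SimpleGraph.mem_neighborFinset] at hpx; exact hpx
            have hpne : p ≠ x := fun h => hxP (h ▸ hp)
            simp [SimpleGraph.mem_neighborFinset]
            exact ⟨hpv.1, hpne, hpv.2, hpx'⟩
        calc P.card ≤ ((P ∩ G.neighborFinset x) ∪ T).card := Finset.card_le_card hsub
          _ ≤ (P ∩ G.neighborFinset x).card + T.card := Finset.card_union_le _ _
      have huP : u ∉ P := by
        intro h
        exact (Finset.mem_erase.mp (Finset.mem_of_mem_erase h)).1 rfl
      have hwP : w ∉ P := by
        intro h
        exact (Finset.mem_erase.mp h).1 rfl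
      have hcu := hcover u Tu huP hTu
      have hcw := hcover w Tw hwP hTw
      -- cross bound
      have hcross : (P ∩ G.neighborFinset u).card + (P ∩ G.neighborFinset w).card
          ≤ P.card + c := by
        have h1 : (P ∩ G.neighborFinset u) ∪ (P ∩ G.neighborFinset w) ⊆ P := by
          intro p hp
          rcases Finset.mem_union.mp hp with h | h
          · exact (Finset.mem_inter.mp h).1
          · exact (Finset.mem_inter.mp h).1
        have h2 : (P ∩ G.neighborFinset u) ∩ (P ∩ G.neighborFinset w)
            ⊆ G.neighborFinset u ∩ G.neighborFinset w := by
          intro p hp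
          simp only [Finset.mem_inter] at hp ⊢
          exact ⟨hp.1.2, hp.2.2⟩
        have h3 := common_nbhd_card_le G hC4 huw hnadj
        calc (P ∩ G.neighborFinset u).card + (P ∩ G.neighborFinset w).card
            = ((P ∩ G.neighborFinset u) ∪ (P ∩ G.neighborFinset w)).card
              + ((P ∩ G.neighborFinset u) ∩ (P ∩ G.neighborFinset w)).card :=
              (Finset.card_union_add_card_inter _ _).symm
          _ ≤ P.card + (G.neighborFinset u ∩ G.neighborFinset w).card :=
              Nat.add_le_add (Finset.card_le_card h1) (Finset.card_le_card h2)
          _ ≤ P.card + c := Nat.add_le_add_left h3 _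
      -- combine in ℕ : 3δ + 1 ≤ 3c + n
      have hfinal : 3 * δ + 1 ≤ 3 * c + n := by omega
      have hfinalR : 3 * (δ : ℝ) + 1 ≤ 3 * (c : ℝ) + (n : ℝ) := by exact_mod_cast hfinal
      linarith
  · -- small case: n ≤ 12, c ≥ 2 suffices
    push_neg at hbig
    have h12 : (n : ℝ) ≤ 12 := by exact_mod_cast Nat.lt_succ_iff.mp hbig
    have : (2 : ℝ) ≤ (c : ℝ) := by exact_mod_cast hc2
    linarith
end

section
/- Let G be a 2k-regular C4-free graph on 4k+1 vertices, let u, w be a non-adjacent dominating pair with unique common neighbor x, and let U_1 = N(u) ∩ N(x) \ {w}, W_1 = N(w) ∩ N(x) \ {u}. Then U_1 and W_1 each induce cliques in G. -/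
open SimpleGraph
open scoped Classical

/-- In a C4-free graph, any two common neighbors of a nonadjacent pair are adjacent. -/
lemma commonClique {V : Type*} (G : SimpleGraph V) (hC4 : IsC4Free G)
    {p q : V} (hpq : p ≠ q) (hnadj : ¬G.Adj p q)
    {c d : V} (hc1 : G.Adj p c) (hc2 : G.Adj q c) (hd1 : G.Adj p d) (hd2 : G.Adj q d)
    (hcd : c ≠ d) : G.Adj c d := by
  by_contra hne
  exact hC4 p c q d hpq hcd hc1 hc2.symm hd2 hd1.symm hnadj hne

lemma half {V : Type*} [Fintype V] (G : SimpleGraph V)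
    (k : ℕ) (hcard : Fintype.card V = 4 * k + 1)
    [DecidableRel G.Adj] (hreg : G.IsRegularOfDegree (2 * k)) (hC4 : IsC4Free G)
    (u w : V) (huw : u ≠ w) (hnadj : ¬G.Adj u w)
    (hdom : ∀ v : V, v ≠ u → v ≠ w → G.Adj u v ∨ G.Adj w v)
    (x : V) (hux : G.Adj u x) (hwx : G.Adj w x)
    (huniq : ∀ y : V, G.Adj u y → G.Adj w y → y = x) :
    G.IsClique ((G.neighborSet u ∩ G.neighborSet x) \ {w}) := by
  intro a ha b hb hab
  by_contra hnab
  simp only [Set.mem_diff, Set.mem_inter_iff, mem_neighborSet, Set.mem_singleton_iff] at ha hb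
  obtain ⟨⟨hua, hxa⟩, haw⟩ := ha
  obtain ⟨⟨hub, hxb⟩, hbw⟩ := hb
  have hax : a ≠ x := hxa.ne'
  have hbx : b ≠ x := hxb.ne'
  have hnwa : ¬G.Adj w a := fun h => hax (huniq a hua h)
  have hnwb : ¬G.Adj w b := fun h => hbx (huniq b hub h)
  have hnwu : ¬G.Adj w u := fun h => hnadj h.symm
  -- finsets
  set Na := G.neighborFinset a with hNa
  set Nb := G.neighborFinset b with hNb
  set U1 := G.neighborFinset u ∩ G.neighborFinset x with hU1
  set W1 := G.neighborFinset w ∩ G.neighborFinset x with hW1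
  set Wf := G.neighborFinset w \ insert x (G.neighborFinset x) with hWf
  have hNacard : Na.card = 2 * k := hreg a
  have hNbcard : Nb.card = 2 * k := hreg b
  -- Claim 1: common neighbors of a and b
  have habS : ({a, b} : Finset V) ⊆ U1 := by
    intro d hd
    simp only [Finset.mem_insert, Finset.mem_singleton] at hd
    rcases hd with rfl | rfl <;>
      simp [hU1, SimpleGraph.mem_neighborFinset, hua, hxa, hub, hxb]
  have hsub1 : Na ∩ Nb ⊆ insert u (insert x (U1 \ {a, b})) := by
    intro d hd
    simp only [Finset.mem_inter, SimpleGraph.mem_neighborFinset, hNa, hNb] at hd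
    obtain ⟨hda, hdb⟩ := hd
    by_cases h1 : d = u
    · simp [h1]
    by_cases h2 : d = x
    · simp [h2]
    have hud : G.Adj u d :=
      commonClique G hC4 hab hnab hua.symm hub.symm hda hdb (fun h => h1 h.symm)
    have hxd : G.Adj x d :=
      commonClique G hC4 hab hnab hxa.symm hxb.symm hda hdb (fun h => h2 h.symm)
    simp only [Finset.mem_insert, Finset.mem_sdiff, Finset.mem_inter,
      SimpleGraph.mem_neighborFinset, Finset.mem_singleton, hU1]
    exact Or.inr (Or.inr ⟨⟨hud, hxd⟩, by
      push_neg
      exact ⟨hda.ne', hdb.ne'⟩⟩)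
  have hCle : (Na ∩ Nb).card ≤ U1.card := by
    have h1 : (insert u (insert x (U1 \ {a, b}))).card ≤ (U1 \ {a, b}).card + 2 := by
      calc (insert u (insert x (U1 \ {a, b}))).card
          ≤ (insert x (U1 \ {a, b})).card + 1 := Finset.card_insert_le _ _
        _ ≤ (U1 \ {a, b}).card + 1 + 1 := by
            exact Nat.add_le_add_right (Finset.card_insert_le _ _) 1
        _ = (U1 \ {a, b}).card + 2 := by ring
    have h2 : (U1 \ {a, b}).card + ({a, b} : Finset V).card = U1.card :=
      Finset.card_sdiff_add_card_eq_card habS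
    have h3 : ({a, b} : Finset V).card = 2 := by
      rw [Finset.card_insert_of_notMem (by simpa using hab), Finset.card_singleton]
    calc (Na ∩ Nb).card ≤ (insert u (insert x (U1 \ {a, b}))).card :=
          Finset.card_le_card hsub1
      _ ≤ (U1 \ {a, b}).card + 2 := h1
      _ = U1.card := by omega
  -- Claim 2: disjointness
  set T : Finset V := {a, b, w} with hT
  have hTcard : T.card = 3 := by
    rw [hT, Finset.card_insert_of_notMem (by simp [hab, haw]),
      Finset.card_insert_of_notMem (by simp [hbw]), Finset.card_singleton]
  have hdisj1 : Disjoint (Na ∪ Nb) (T ∪ Wf) := by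
    rw [Finset.disjoint_left]
    intro d hd hd'
    have hd2 : G.Adj a d ∨ G.Adj b d := by
      simpa [hNa, hNb, SimpleGraph.mem_neighborFinset] using hd
    rcases Finset.mem_union.mp hd' with hdT | hdW
    · simp only [hT, Finset.mem_insert, Finset.mem_singleton] at hdT
      rcases hdT with rfl | rfl | rfl
      · rcases hd2 with h | h
        · exact G.irrefl h
        · exact hnab h.symm
      · rcases hd2 with h | h
        · exact hnab h
        · exact G.irrefl h
      · rcases hd2 with h | h
        · exact hnwa h.symm
        · exact hnwb h.symm
    · simp only [hWf, Finset.mem_sdiff, Finset.mem_insert,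
        SimpleGraph.mem_neighborFinset] at hdW
      obtain ⟨hwd, hdn⟩ := hdW
      push_neg at hdn
      obtain ⟨hdx, hdnx⟩ := hdn
      rcases hd2 with h | h
      · exact hdnx (commonClique G hC4 haw (fun h' => hnwa h'.symm)
          hxa.symm hwx h hwd (fun h' => hdx h'.symm))
      · exact hdnx (commonClique G hC4 hbw (fun h' => hnwb h'.symm)
          hxb.symm hwx h hwd (fun h' => hdx h'.symm))
  have hdisj2 : Disjoint T Wf := by
    rw [Finset.disjoint_left]
    intro d hd hd'
    have hwd : G.Adj w d := (SimpleGraph.mem_neighborFinset _ _ _).mp (Finset.mem_sdiff.mp hd').1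
    simp only [hT, Finset.mem_insert, Finset.mem_singleton] at hd
    rcases hd with rfl | rfl | rfl
    · exact hnwa hwd
    · exact hnwb hwd
    · exact G.irrefl hwd
  have hUnionBound : (Na ∪ Nb).card + 3 + Wf.card ≤ 4 * k + 1 := by
    have h1 : ((Na ∪ Nb) ∪ (T ∪ Wf)).card ≤ 4 * k + 1 := by
      rw [← hcard]; exact Finset.card_le_univ _
    rw [Finset.card_union_of_disjoint hdisj1, Finset.card_union_of_disjoint hdisj2,
      hTcard] at h1
    omega
  -- Claim 3: N(w) = insert x (W1 ∪ Wf)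
  have hNw : G.neighborFinset w = insert x (W1 ∪ Wf) := by
    ext d
    simp only [Finset.mem_insert, Finset.mem_union, Finset.mem_inter, Finset.mem_sdiff,
      SimpleGraph.mem_neighborFinset, hW1, hWf]
    constructor
    · intro hwd
      by_cases h1 : d = x
      · exact Or.inl h1
      by_cases h2 : G.Adj x d
      · exact Or.inr (Or.inl ⟨hwd, h2⟩)
      · exact Or.inr (Or.inr ⟨hwd, by simp [h1, h2]⟩)
    · rintro (rfl | ⟨hwd, _⟩ | ⟨hwd, _⟩)
      · exact hwx
      · exact hwd
      · exact hwd
  have hW1Wf : 1 + W1.card + Wf.card = 2 * k := by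
    have hx1 : x ∉ W1 ∪ Wf := by
      simp only [Finset.mem_union, Finset.mem_inter, Finset.mem_sdiff,
        SimpleGraph.mem_neighborFinset, hW1, hWf]
      push_neg
      exact ⟨fun _ h => G.irrefl h, fun _ => by simp⟩
    have hd12 : Disjoint W1 Wf := by
      rw [Finset.disjoint_left]
      intro d hd hd'
      have : G.Adj x d := (SimpleGraph.mem_neighborFinset _ _ _).mp (Finset.mem_inter.mp hd).2
      have h2 := (Finset.mem_sdiff.mp hd').2
      simp only [Finset.mem_insert, SimpleGraph.mem_neighborFinset] at h2
      push_neg at h2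
      exact h2.2 this
    have := hreg w
    rw [SimpleGraph.degree, hNw, Finset.card_insert_of_notMem hx1,
      Finset.card_union_of_disjoint hd12] at this
    omega
  -- Claim 4: N(x) = insert u (insert w (U1 ∪ W1))
  have hNx : G.neighborFinset x = insert u (insert w (U1 ∪ W1)) := by
    ext d
    simp only [Finset.mem_insert, Finset.mem_union, Finset.mem_inter,
      SimpleGraph.mem_neighborFinset, hU1, hW1]
    constructor
    · intro hxd
      by_cases h1 : d = u
      · exact Or.inl h1
      by_cases h2 : d = w
      · exact Or.inr (Or.inl h2)
      rcases hdom d h1 h2 with h | h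
      · exact Or.inr (Or.inr (Or.inl ⟨h, hxd⟩))
      · exact Or.inr (Or.inr (Or.inr ⟨h, hxd⟩))
    · rintro (rfl | rfl | ⟨_, h⟩ | ⟨_, h⟩)
      · exact hux.symm
      · exact hwx.symm
      · exact h
      · exact h
  have hU1W1 : 2 + U1.card + W1.card = 2 * k := by
    have hu1 : u ∉ insert w (U1 ∪ W1) := by
      simp only [Finset.mem_insert, Finset.mem_union, Finset.mem_inter,
        SimpleGraph.mem_neighborFinset, hU1, hW1]
      push_neg
      exact ⟨huw, fun h _ => G.irrefl h, fun h _ => hnwu h⟩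
    have hw1 : w ∉ U1 ∪ W1 := by
      simp only [Finset.mem_union, Finset.mem_inter,
        SimpleGraph.mem_neighborFinset, hU1, hW1]
      push_neg
      exact ⟨fun h _ => hnadj h, fun h _ => G.irrefl h⟩
    have hd12 : Disjoint U1 W1 := by
      rw [Finset.disjoint_left]
      intro d hd hd'
      have h1 : G.Adj u d := (SimpleGraph.mem_neighborFinset _ _ _).mp (Finset.mem_inter.mp hd).1
      have h2 : G.Adj w d := (SimpleGraph.mem_neighborFinset _ _ _).mp (Finset.mem_inter.mp hd').1
      have h3 : G.Adj x d := (SimpleGraph.mem_neighborFinset _ _ _).mp (Finset.mem_inter.mp hd).2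
      exact h3.ne' (huniq d h1 h2)
    have := hreg x
    rw [SimpleGraph.degree, hNx, Finset.card_insert_of_notMem hu1,
      Finset.card_insert_of_notMem hw1, Finset.card_union_of_disjoint hd12] at this
    omega
  -- Final count
  have hfin : (Na ∪ Nb).card + (Na ∩ Nb).card = 4 * k := by
    rw [Finset.card_union_add_card_inter, hNacard, hNbcard]; ring
  omega

theorem stmt14 {V : Type*} [Fintype V] (G : SimpleGraph V)
    (k : ℕ) (hcard : Fintype.card V = 4 * k + 1)
    [DecidableRel G.Adj] (hreg : G.IsRegularOfDegree (2 * k)) (hC4 : IsC4Free G)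
    (u w : V) (huw : u ≠ w) (hnadj : ¬G.Adj u w)
    (hdom : ∀ v : V, v ≠ u → v ≠ w → G.Adj u v ∨ G.Adj w v)
    (x : V) (hux : G.Adj u x) (hwx : G.Adj w x)
    (huniq : ∀ y : V, G.Adj u y → G.Adj w y → y = x) :
    G.IsClique ((G.neighborSet u ∩ G.neighborSet x) \ {w}) ∧
      G.IsClique ((G.neighborSet w ∩ G.neighborSet x) \ {u}) := by
  constructor
  · exact half G k hcard hreg hC4 u w huw hnadj hdom x hux hwx huniq
  · exact half G k hcard hreg hC4 w u huw.symm (fun h => hnadj h.symm)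
      (fun v h1 h2 => (hdom v h2 h1).symm) x hwx hux (fun y h1 h2 => huniq y h2 h1)
end

section
/- Let G be a 2k-regular C4-free graph on 4k+1 vertices containing a non-adjacent dominating pair of vertices. Then G contains a clique of size at least k+1. -/
open SimpleGraph
open scoped Classical

/-- Main auxiliary lemma: given the unique common neighbor `x` of the dominating
pair `(u, w)`, if `|N(x) ∩ N(u)| + 1 ≤ k` then there is a clique of size `k+1`. -/
lemma aux_clique15 {V : Type*} [Fintype V] (G : SimpleGraph V)
    (k : ℕ) [DecidableRel G.Adj] (hreg : G.IsRegularOfDegree (2 * k)) (hC4 : IsC4Free G)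
    (u w x : V) (hnadj : ¬G.Adj u w)
    (hdom : ∀ v : V, v ≠ u → v ≠ w → G.Adj u v ∨ G.Adj w v)
    (hinter : G.neighborFinset u ∩ G.neighborFinset w = {x})
    (hp : (G.neighborFinset x ∩ G.neighborFinset u).card + 1 ≤ k)
    (hq : (G.neighborFinset x ∩ G.neighborFinset u).card
        + (G.neighborFinset x ∩ G.neighborFinset w).card + 2 = 2 * k) :
    ∃ s : Finset V, G.IsClique ↑s ∧ k + 1 ≤ s.card := by
  classical
  have hcNu : (G.neighborFinset u).card = 2 * k := by
    rw [G.card_neighborFinset_eq_degree]; exact hreg u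
  have hcNw : (G.neighborFinset w).card = 2 * k := by
    rw [G.card_neighborFinset_eq_degree]; exact hreg w
  have hxmem : x ∈ G.neighborFinset u ∩ G.neighborFinset w := by
    rw [hinter]; exact Finset.mem_singleton_self x
  have hxu : G.Adj u x := by
    have := (Finset.mem_inter.mp hxmem).1
    rwa [SimpleGraph.mem_neighborFinset] at this
  have hxw : G.Adj w x := by
    have := (Finset.mem_inter.mp hxmem).2
    rwa [SimpleGraph.mem_neighborFinset] at this
  have hxNx : x ∉ G.neighborFinset x := by
    rw [SimpleGraph.mem_neighborFinset]; exact G.irrefl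
  -- A0 : neighbors of u not equal/adjacent to x ; B0 : neighbors of w not equal/adjacent to x
  set A0 : Finset V := G.neighborFinset u \ insert x (G.neighborFinset x) with hA0def
  set B0 : Finset V := G.neighborFinset w \ insert x (G.neighborFinset x) with hB0def
  have hA0mem : ∀ {a : V}, a ∈ A0 ↔ G.Adj u a ∧ a ≠ x ∧ ¬G.Adj x a := by
    intro a
    rw [hA0def]
    simp only [Finset.mem_sdiff, Finset.mem_insert, SimpleGraph.mem_neighborFinset, not_or]
  have hB0mem : ∀ {b : V}, b ∈ B0 ↔ G.Adj w b ∧ b ≠ x ∧ ¬G.Adj x b := by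
    intro b
    rw [hB0def]
    simp only [Finset.mem_sdiff, Finset.mem_insert, SimpleGraph.mem_neighborFinset, not_or]
  -- cardinality of A0
  have hIA : G.neighborFinset u ∩ insert x (G.neighborFinset x)
      = insert x (G.neighborFinset x ∩ G.neighborFinset u) := by
    ext z
    simp only [Finset.mem_inter, Finset.mem_insert]
    constructor
    · rintro ⟨hzu, hz | hz⟩
      · exact Or.inl hz
      · exact Or.inr ⟨hz, hzu⟩
    · rintro (rfl | ⟨hz1, hz2⟩)
      · exact ⟨(Finset.mem_inter.mp hxmem).1, Or.inl rfl⟩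
      · exact ⟨hz2, Or.inr hz1⟩
  have hA0card : A0.card + ((G.neighborFinset x ∩ G.neighborFinset u).card + 1) = 2 * k := by
    have h1 := Finset.card_inter_add_card_sdiff (G.neighborFinset u) (insert x (G.neighborFinset x))
    rw [hIA, Finset.card_insert_of_notMem (fun hm => hxNx (Finset.mem_inter.mp hm).1),
      hcNu, ← hA0def] at h1
    omega
  have hIB : G.neighborFinset w ∩ insert x (G.neighborFinset x)
      = insert x (G.neighborFinset x ∩ G.neighborFinset w) := by
    ext z
    simp only [Finset.mem_inter, Finset.mem_insert]
    constructor
    · rintro ⟨hzw, hz | hz⟩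
      · exact Or.inl hz
      · exact Or.inr ⟨hz, hzw⟩
    · rintro (rfl | ⟨hz1, hz2⟩)
      · exact ⟨(Finset.mem_inter.mp hxmem).2, Or.inl rfl⟩
      · exact ⟨hz2, Or.inr hz1⟩
  have hB0card : B0.card = (G.neighborFinset x ∩ G.neighborFinset u).card + 1 := by
    have h1 := Finset.card_inter_add_card_sdiff (G.neighborFinset w) (insert x (G.neighborFinset x))
    rw [hIB, Finset.card_insert_of_notMem (fun hm => hxNx (Finset.mem_inter.mp hm).1),
      hcNw, ← hB0def] at h1
    omega
  -- membership in B0 from adjacency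
  have hBmem : ∀ {a b : V}, a ∈ A0 → G.Adj a b → G.Adj w b → b ∈ B0 := by
    intro a b haA hab hwb
    have hau : G.Adj u a := (hA0mem.mp haA).1
    have hax : ¬G.Adj x a := (hA0mem.mp haA).2.2
    have hbx : b ≠ x := by
      intro h
      rw [h] at hab
      exact hax hab.symm
    have hbu : ¬G.Adj u b := by
      intro hub
      have hbm : b ∈ G.neighborFinset u ∩ G.neighborFinset w := by
        rw [Finset.mem_inter, SimpleGraph.mem_neighborFinset, SimpleGraph.mem_neighborFinset]
        exact ⟨hub, hwb⟩
      rw [hinter, Finset.mem_singleton] at hbm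
      exact hbx hbm
    have hxb : ¬G.Adj x b := by
      intro hxb
      exact hC4 u a b x (by intro h; rw [← h] at hwb; exact hnadj hwb.symm) (hA0mem.mp haA).2.1
        hau hab hxb.symm hxu.symm hbu (fun h => hax h.symm)
    exact hB0mem.mpr ⟨hwb, hbx, hxb⟩
  -- degree bound for vertices of A0
  have hdegbound : ∀ c ∈ A0, 2 * k ≤ 1 + (G.neighborFinset c ∩ G.neighborFinset u).card
      + (G.neighborFinset c ∩ G.neighborFinset w).card := by
    intro c hc
    have hsub : G.neighborFinset c ⊆ insert u ((G.neighborFinset c ∩ G.neighborFinset u)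
        ∪ (G.neighborFinset c ∩ G.neighborFinset w)) := by
      intro z hz
      have hcz : G.Adj c z := by rwa [SimpleGraph.mem_neighborFinset] at hz
      rcases eq_or_ne z u with rfl | hzu
      · exact Finset.mem_insert_self _ _
      · have hzw : z ≠ w := by
          intro heq
          rw [heq] at hcz
          have hcm : c ∈ G.neighborFinset u ∩ G.neighborFinset w := by
            rw [Finset.mem_inter, SimpleGraph.mem_neighborFinset, SimpleGraph.mem_neighborFinset]
            exact ⟨(hA0mem.mp hc).1, hcz.symm⟩
          rw [hinter, Finset.mem_singleton] at hcm
          exact (hA0mem.mp hc).2.1 hcm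
        rcases hdom z hzu hzw with h | h
        · refine Finset.mem_insert_of_mem (Finset.mem_union_left _ ?_)
          rw [Finset.mem_inter, SimpleGraph.mem_neighborFinset, SimpleGraph.mem_neighborFinset]
          exact ⟨hcz, h⟩
        · refine Finset.mem_insert_of_mem (Finset.mem_union_right _ ?_)
          rw [Finset.mem_inter, SimpleGraph.mem_neighborFinset, SimpleGraph.mem_neighborFinset]
          exact ⟨hcz, h⟩
    have h1 : (G.neighborFinset c).card ≤ (insert u ((G.neighborFinset c ∩ G.neighborFinset u)
        ∪ (G.neighborFinset c ∩ G.neighborFinset w))).card := Finset.card_le_card hsub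
    have h2 := Finset.card_insert_le u ((G.neighborFinset c ∩ G.neighborFinset u)
        ∪ (G.neighborFinset c ∩ G.neighborFinset w))
    have h3 := Finset.card_union_le (G.neighborFinset c ∩ G.neighborFinset u)
        (G.neighborFinset c ∩ G.neighborFinset w)
    have h4 : (G.neighborFinset c).card = 2 * k := by
      rw [G.card_neighborFinset_eq_degree]; exact hreg c
    omega
  -- dichotomy on A0
  by_cases hcl : ∀ a ∈ A0, ∀ b ∈ A0, a ≠ b → G.Adj a b
  · -- A0 is a clique; take {u} ∪ A0
    refine ⟨insert u A0, ?_, ?_⟩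
    · rw [SimpleGraph.isClique_iff]
      intro y hy z hz hyz
      simp only [Finset.coe_insert, Set.mem_insert_iff, Finset.mem_coe] at hy hz
      rcases hy with rfl | hy
      · rcases hz with rfl | hz
        · exact absurd rfl hyz
        · exact (hA0mem.mp hz).1
      · rcases hz with rfl | hz
        · exact (hA0mem.mp hy).1.symm
        · exact hcl y hy z hz hyz
    · have huA0 : u ∉ A0 := by
        intro hu
        exact G.irrefl (hA0mem.mp hu).1
      rw [Finset.card_insert_of_notMem huA0]
      omega
  · -- A0 has a nonadjacent pair
    push_neg at hcl
    obtain ⟨a, ha, a', ha', hne, hnon⟩ := hcl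
    have hau : G.Adj u a := (hA0mem.mp ha).1
    have ha'u : G.Adj u a' := (hA0mem.mp ha').1
    -- the B-neighborhoods of a and a' are disjoint subsets of B0
    set Fa : Finset V := G.neighborFinset a ∩ G.neighborFinset w with hFadef
    set Fa' : Finset V := G.neighborFinset a' ∩ G.neighborFinset w with hFa'def
    have hFaB0 : Fa ⊆ B0 := by
      intro b hb
      rw [hFadef, Finset.mem_inter, SimpleGraph.mem_neighborFinset,
        SimpleGraph.mem_neighborFinset] at hb
      exact hBmem ha hb.1 hb.2
    have hFa'B0 : Fa' ⊆ B0 := by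
      intro b hb
      rw [hFa'def, Finset.mem_inter, SimpleGraph.mem_neighborFinset,
        SimpleGraph.mem_neighborFinset] at hb
      exact hBmem ha' hb.1 hb.2
    have hdisjoint : Disjoint Fa Fa' := by
      rw [Finset.disjoint_left]
      intro b hb hb'
      rw [hFadef, Finset.mem_inter, SimpleGraph.mem_neighborFinset,
        SimpleGraph.mem_neighborFinset] at hb
      rw [hFa'def, Finset.mem_inter, SimpleGraph.mem_neighborFinset,
        SimpleGraph.mem_neighborFinset] at hb'
      have hbB0 : b ∈ B0 := hBmem ha hb.1 hb.2
      have hub : ¬G.Adj u b := by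
        intro hub
        have hbm : b ∈ G.neighborFinset u ∩ G.neighborFinset w := by
          rw [Finset.mem_inter, SimpleGraph.mem_neighborFinset, SimpleGraph.mem_neighborFinset]
          exact ⟨hub, hb.2⟩
        rw [hinter, Finset.mem_singleton] at hbm
        exact (hB0mem.mp hbB0).2.1 hbm
      exact hC4 a u a' b hne (by intro h; rw [← h] at hb; exact hnadj hb.2.symm)
        hau.symm ha'u hb'.1 hb.1.symm hnon hub
    have hFsum : Fa.card + Fa'.card ≤ B0.card := by
      have h1 : (Fa ∪ Fa').card = Fa.card + Fa'.card := Finset.card_union_of_disjoint hdisjoint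
      have h2 : Fa ∪ Fa' ⊆ B0 := Finset.union_subset hFaB0 hFa'B0
      rw [← h1]
      exact Finset.card_le_card h2
    -- the common neighborhood inside N(u)
    set Ga : Finset V := G.neighborFinset a ∩ G.neighborFinset u with hGadef
    set Ga' : Finset V := G.neighborFinset a' ∩ G.neighborFinset u with hGa'def
    have hGsub : Ga ∪ Ga' ⊆ G.neighborFinset u \ {a, a'} := by
      intro z hz
      rw [Finset.mem_sdiff, Finset.mem_insert, Finset.mem_singleton]
      rcases Finset.mem_union.mp hz with hz | hz
      · rw [hGadef, Finset.mem_inter, SimpleGraph.mem_neighborFinset] at hz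
        refine ⟨hz.2, ?_⟩
        rintro (h | h)
        · rw [h] at hz; exact G.irrefl hz.1
        · rw [h] at hz; exact hnon hz.1
      · rw [hGa'def, Finset.mem_inter, SimpleGraph.mem_neighborFinset] at hz
        refine ⟨hz.2, ?_⟩
        rintro (h | h)
        · rw [h] at hz; exact hnon hz.1.symm
        · rw [h] at hz; exact G.irrefl hz.1
    have hpairsub : ({a, a'} : Finset V) ⊆ G.neighborFinset u := by
      intro z hz
      rcases Finset.mem_insert.mp hz with h | hz
      · rw [h, SimpleGraph.mem_neighborFinset]; exact hau
      · rw [Finset.mem_singleton] at hz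
        rw [hz, SimpleGraph.mem_neighborFinset]; exact ha'u
    have hsd : (G.neighborFinset u \ {a, a'}).card + 2 = 2 * k := by
      have h2 := Finset.card_sdiff_add_card_eq_card hpairsub
      rw [Finset.card_pair hne, hcNu] at h2
      exact h2
    have hkey := Finset.card_union_add_card_inter Ga Ga'
    have hle : (Ga ∪ Ga').card ≤ (G.neighborFinset u \ {a, a'}).card :=
      Finset.card_le_card hGsub
    have hT : k ≤ (Ga ∩ Ga').card := by
      have hda := hdegbound a ha
      have hda' := hdegbound a' ha'
      rw [← hGadef, ← hFadef] at hda
      rw [← hGa'def, ← hFa'def] at hda'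
      omega
    -- the clique
    have hmemT : ∀ {t : V}, t ∈ Ga ∩ Ga' → G.Adj a t ∧ G.Adj a' t := by
      intro t ht
      obtain ⟨h1, h2⟩ := Finset.mem_inter.mp ht
      rw [hGadef, Finset.mem_inter, SimpleGraph.mem_neighborFinset] at h1
      rw [hGa'def, Finset.mem_inter, SimpleGraph.mem_neighborFinset] at h2
      exact ⟨h1.1, h2.1⟩
    refine ⟨insert a (Ga ∩ Ga'), ?_, ?_⟩
    · rw [SimpleGraph.isClique_iff]
      intro y hy z hz hyz
      simp only [Finset.coe_insert, Set.mem_insert_iff, Finset.mem_coe] at hy hz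
      rcases hy with rfl | hy
      · rcases hz with rfl | hz
        · exact absurd rfl hyz
        · exact (hmemT hz).1
      · rcases hz with rfl | hz
        · exact (hmemT hy).1.symm
        · by_contra hyzadj
          exact hC4 a y a' z hne hyz (hmemT hy).1 (hmemT hy).2.symm
            (hmemT hz).2 (hmemT hz).1.symm hnon hyzadj
    · have haT : a ∉ Ga ∩ Ga' := by
        intro haT
        exact G.irrefl (hmemT haT).1
      rw [Finset.card_insert_of_notMem haT]
      omega

theorem stmt15 {V : Type*} [Fintype V] (G : SimpleGraph V)
    (k : ℕ) (hcard : Fintype.card V = 4 * k + 1)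
    [DecidableRel G.Adj] (hreg : G.IsRegularOfDegree (2 * k)) (hC4 : IsC4Free G)
    (u w : V) (huw : u ≠ w) (hnadj : ¬G.Adj u w)
    (hdom : ∀ v : V, v ≠ u → v ≠ w → G.Adj u v ∨ G.Adj w v) :
    ∃ s : Finset V, G.IsClique ↑s ∧ k + 1 ≤ s.card := by
  classical
  have hcNu : (G.neighborFinset u).card = 2 * k := by
    rw [G.card_neighborFinset_eq_degree]; exact hreg u
  have hcNw : (G.neighborFinset w).card = 2 * k := by
    rw [G.card_neighborFinset_eq_degree]; exact hreg w
  -- N(u) ∪ N(w) = V \ {u, w}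
  have huni : G.neighborFinset u ∪ G.neighborFinset w = Finset.univ \ {u, w} := by
    ext v
    simp only [Finset.mem_union, Finset.mem_sdiff, Finset.mem_univ, true_and,
      Finset.mem_insert, Finset.mem_singleton, SimpleGraph.mem_neighborFinset, not_or]
    constructor
    · rintro (h | h)
      · exact ⟨h.ne', fun hvw => by subst hvw; exact hnadj h⟩
      · refine ⟨fun hvu => ?_, h.ne'⟩
        subst hvu; exact hnadj h.symm
    · rintro ⟨hvu, hvw⟩
      exact hdom v hvu hvw
  have hsd : (Finset.univ \ ({u, w} : Finset V)).card + 2 = Fintype.card V := by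
    have h1 := Finset.card_sdiff_add_card_eq_card (Finset.subset_univ ({u, w} : Finset V))
    rw [Finset.card_pair huw, Finset.card_univ] at h1
    exact h1
  have hui := Finset.card_union_add_card_inter (G.neighborFinset u) (G.neighborFinset w)
  rw [huni, hcNu, hcNw] at hui
  have hint1 : (G.neighborFinset u ∩ G.neighborFinset w).card = 1 := by omega
  obtain ⟨x, hx⟩ := Finset.card_eq_one.mp hint1
  have hxmem : x ∈ G.neighborFinset u ∩ G.neighborFinset w := by
    rw [hx]; exact Finset.mem_singleton_self x
  have hxu : G.Adj u x := by
    have := (Finset.mem_inter.mp hxmem).1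
    rwa [SimpleGraph.mem_neighborFinset] at this
  have hxw : G.Adj w x := by
    have := (Finset.mem_inter.mp hxmem).2
    rwa [SimpleGraph.mem_neighborFinset] at this
  have hcNx : (G.neighborFinset x).card = 2 * k := by
    rw [G.card_neighborFinset_eq_degree]; exact hreg x
  -- N(x) = {u, w} ∪ (N(x)∩N(u)) ∪ (N(x)∩N(w))
  have hNxeq : G.neighborFinset x = insert u (insert w
      ((G.neighborFinset x ∩ G.neighborFinset u) ∪ (G.neighborFinset x ∩ G.neighborFinset w))) := by
    ext z
    simp only [Finset.mem_insert, Finset.mem_union, Finset.mem_inter,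
      SimpleGraph.mem_neighborFinset]
    constructor
    · intro hz
      rcases eq_or_ne z u with rfl | hzu
      · exact Or.inl rfl
      rcases eq_or_ne z w with rfl | hzw
      · exact Or.inr (Or.inl rfl)
      rcases hdom z hzu hzw with h | h
      · exact Or.inr (Or.inr (Or.inl ⟨hz, h⟩))
      · exact Or.inr (Or.inr (Or.inr ⟨hz, h⟩))
    · rintro (rfl | rfl | ⟨hz, _⟩ | ⟨hz, _⟩)
      · exact hxu.symm
      · exact hxw.symm
      · exact hz
      · exact hz
  have hu_notin : u ∉ insert w
      ((G.neighborFinset x ∩ G.neighborFinset u) ∪ (G.neighborFinset x ∩ G.neighborFinset w)) := by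
    simp only [Finset.mem_insert, Finset.mem_union, Finset.mem_inter,
      SimpleGraph.mem_neighborFinset, not_or]
    exact ⟨huw, fun h => G.irrefl h.2, fun h => hnadj h.2.symm⟩
  have hw_notin : w ∉
      (G.neighborFinset x ∩ G.neighborFinset u) ∪ (G.neighborFinset x ∩ G.neighborFinset w) := by
    simp only [Finset.mem_union, Finset.mem_inter, SimpleGraph.mem_neighborFinset, not_or]
    exact ⟨fun h => hnadj h.2, fun h => G.irrefl h.2⟩
  have hdisjPQ : Disjoint (G.neighborFinset x ∩ G.neighborFinset u)
      (G.neighborFinset x ∩ G.neighborFinset w) := by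
    rw [Finset.disjoint_left]
    intro z hz1 hz2
    have hz : z ∈ G.neighborFinset u ∩ G.neighborFinset w :=
      Finset.mem_inter.mpr ⟨(Finset.mem_inter.mp hz1).2, (Finset.mem_inter.mp hz2).2⟩
    rw [hx, Finset.mem_singleton] at hz
    subst hz
    have := (Finset.mem_inter.mp hz1).1
    rw [SimpleGraph.mem_neighborFinset] at this
    exact G.irrefl this
  have hq : (G.neighborFinset x ∩ G.neighborFinset u).card
      + (G.neighborFinset x ∩ G.neighborFinset w).card + 2 = 2 * k := by
    rw [hNxeq, Finset.card_insert_of_notMem hu_notin, Finset.card_insert_of_notMem hw_notin,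
      Finset.card_union_of_disjoint hdisjPQ] at hcNx
    omega
  rcases le_or_gt ((G.neighborFinset x ∩ G.neighborFinset u).card + 1) k with hpk | hpk
  · exact aux_clique15 G k hreg hC4 u w x hnadj hdom hx hpk hq
  · have hq' : (G.neighborFinset x ∩ G.neighborFinset w).card
        + (G.neighborFinset x ∩ G.neighborFinset u).card + 2 = 2 * k := by omega
    have hpk' : (G.neighborFinset x ∩ G.neighborFinset w).card + 1 ≤ k := by omega
    exact aux_clique15 G k hreg hC4 w u x (fun h => hnadj h.symm)
      (fun v h1 h2 => (hdom v h2 h1).symm)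
      (by rw [Finset.inter_comm]; exact hx) hpk' hq'
end

section
/- If G is a C4-free graph on n vertices with independence number at least 3 and minimum degree δ, then there exist two non-adjacent vertices whose common neighborhood induces a clique of size greater than δ − n/3. -/
open SimpleGraph
open scoped Classical

lemma clique_of_c4free {V : Type*} {G : SimpleGraph V} (hC4 : IsC4Free G) {u v : V}
    (huv : u ≠ v) (hna : ¬G.Adj u v) : G.IsClique (G.commonNeighbors u v) := by
  intro x hx y hy hxy
  by_contra hadj
  obtain ⟨hux, hvx⟩ := hx
  obtain ⟨huy, hvy⟩ := hy
  exact hC4 u x v y huv hxy hux hvx.symm hvy huy.symm hna hadj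

lemma ncard_common {V : Type*} [Fintype V] (G : SimpleGraph V) [DecidableRel G.Adj]
    (u v : V) :
    (G.commonNeighbors u v).ncard = (G.neighborFinset u ∩ G.neighborFinset v).card := by
  rw [Set.ncard_eq_toFinset_card']
  congr 1
  ext x
  rw [Set.mem_toFinset]
  simp [commonNeighbors, mem_neighborFinset]

theorem stmt17 {V : Type*} [Fintype V] (G : SimpleGraph V) [DecidableRel G.Adj]
    (hC4 : IsC4Free G) (hα : 3 ≤ _root_.indepNum G) :
    ∃ u v : V, u ≠ v ∧ ¬G.Adj u v ∧ G.IsClique (G.commonNeighbors u v) ∧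
      ((G.commonNeighbors u v).ncard : ℝ) >
        (G.minDegree : ℝ) - (Fintype.card V : ℝ) / 3 := by
  classical
  -- get an independent set of size 3
  obtain ⟨s, hs⟩ := Gᶜ.exists_isNClique_cliqueNum
  have hcard : 3 ≤ s.card := by rw [hs.card_eq]; exact hα
  obtain ⟨t, hts, htcard⟩ := Finset.exists_subset_card_eq hcard
  obtain ⟨a, b, c, hab, hac, hbc, rfl⟩ := Finset.card_eq_three.mp htcard
  have hclique := hs.isClique
  have hadj : ∀ x ∈ ({a, b, c} : Finset V), ∀ y ∈ ({a, b, c} : Finset V),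
      x ≠ y → ¬G.Adj x y := by
    intro x hx y hy hxy
    have := hclique (hts hx) (hts hy) hxy
    exact this.2
  have hmem : ∀ x ∈ ({a, b, c} : Finset V), True := fun _ _ => trivial
  have hAB : ¬G.Adj a b := hadj a (by simp) b (by simp) hab
  have hAC : ¬G.Adj a c := hadj a (by simp) c (by simp) hac
  have hBC : ¬G.Adj b c := hadj b (by simp) c (by simp) hbc
  haveI : Nonempty V := ⟨a⟩
  set n := Fintype.card V
  set δ := G.minDegree
  set Na := G.neighborFinset a
  set Nb := G.neighborFinset b
  set Nc := G.neighborFinset c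
  -- a,b,c are not in the union of the neighborhoods
  have hnotin : ∀ x ∈ ({a, b, c} : Finset V), x ∉ Na ∪ Nb ∪ Nc := by
    intro x hx
    simp only [Finset.mem_insert, Finset.mem_singleton] at hx
    simp only [Finset.mem_union, Na, Nb, Nc, mem_neighborFinset]
    rcases hx with rfl | rfl | rfl
    · rintro ((h | h) | h)
      exacts [G.loopless.irrefl _ h, hAB h.symm, hAC h.symm]
    · rintro ((h | h) | h)
      exacts [hAB h, G.loopless.irrefl _ h, hBC h.symm]
    · rintro ((h | h) | h)
      exacts [hAC h, hBC h, G.loopless.irrefl _ h]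
  have hdisj : Disjoint (Na ∪ Nb ∪ Nc) ({a, b, c} : Finset V) := by
    rw [Finset.disjoint_right]
    intro x hx
    exact hnotin x hx
  have hub : (Na ∪ Nb ∪ Nc).card + 3 ≤ n := by
    have := Finset.card_le_card (Finset.subset_univ ((Na ∪ Nb ∪ Nc) ∪ {a, b, c}))
    rw [Finset.card_union_of_disjoint hdisj, htcard] at this
    simpa using this
  -- inclusion-exclusion
  have hIE1 : (Na ∪ Nb).card + (Na ∩ Nb).card = Na.card + Nb.card :=
    Finset.card_union_add_card_inter Na Nb
  have hIE2 : ((Na ∪ Nb) ∪ Nc).card + ((Na ∪ Nb) ∩ Nc).card = (Na ∪ Nb).card + Nc.card :=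
    Finset.card_union_add_card_inter _ _
  have hsub : (Na ∪ Nb) ∩ Nc ⊆ (Na ∩ Nc) ∪ (Nb ∩ Nc) := by
    intro x hx
    simp only [Finset.mem_inter, Finset.mem_union] at hx ⊢
    tauto
  have hIE3 : ((Na ∪ Nb) ∩ Nc).card ≤ (Na ∩ Nc).card + (Nb ∩ Nc).card :=
    le_trans (Finset.card_le_card hsub) (Finset.card_union_le _ _)
  have hdeg : δ ≤ Na.card ∧ δ ≤ Nb.card ∧ δ ≤ Nc.card := by
    refine ⟨?_, ?_, ?_⟩ <;>
      simpa [Na, Nb, Nc, ← card_neighborFinset_eq_degree] using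
        (by first
          | exact G.minDegree_le_degree a
          | exact G.minDegree_le_degree b
          | exact G.minDegree_le_degree c)
  have hkey : 3 * δ + 3 ≤ n + ((Na ∩ Nb).card + (Na ∩ Nc).card + (Nb ∩ Nc).card) := by
    omega
  -- finishing helper
  have finish : ∀ u v : V, u ≠ v → ¬G.Adj u v →
      3 * δ + 3 ≤ n + 3 * (G.neighborFinset u ∩ G.neighborFinset v).card →
      ∃ u v : V, u ≠ v ∧ ¬G.Adj u v ∧ G.IsClique (G.commonNeighbors u v) ∧
        ((G.commonNeighbors u v).ncard : ℝ) > (δ : ℝ) - (n : ℝ) / 3 := by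
    intro u v huv hna h3
    refine ⟨u, v, huv, hna, clique_of_c4free hC4 huv hna, ?_⟩
    rw [ncard_common]
    have := h3
    push_cast [← @Nat.cast_le ℝ] at this ⊢
    linarith
  set A := (Na ∩ Nb).card
  set B := (Na ∩ Nc).card
  set C := (Nb ∩ Nc).card
  rcases le_total A B with h1 | h1
  · rcases le_total B C with h2 | h2
    · exact finish b c hbc hBC (by show _ ≤ _ + 3 * C; omega)
    · exact finish a c hac hAC (by show _ ≤ _ + 3 * B; omega)
  · rcases le_total A C with h2 | h2
    · exact finish b c hbc hBC (by show _ ≤ _ + 3 * C; omega)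
    · exact finish a b hab hAB (by show _ ≤ _ + 3 * A; omega)
end
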